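/- arXiv:2011.05371 — 9 statements merged into one kernel-verified Lean document; each statement's English description precedes it below -/
import Mathlib

section
/- Let G be a graph with no isolated vertex and H a nontrivial graph with domination number γ(H) = 1. Then the Italian domination number of the lexicographic product G∘H equals the (2,1,0)-domination number of G. -/
open scoped Classical
open Finset SimpleGraph

/-- A `w`-dominating function: `f : V → {0,…,l}` with `f(N(v)) ≥ w_{f(v)}` for all `v`. -/
def WDom {V : Type*} [Fintype V] (G : SimpleGraph V) {l : ℕ} (w : Fin (l+1) → ℕ)
    (f : V → Fin (l+1)) : Prop :=
  ∀ v, w (f v) ≤ ∑ u, if G.Adj v u then (f u : ℕ) else 0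

/-- The `w`-domination number. -/
noncomputable def gammaW {V : Type*} [Fintype V] (G : SimpleGraph V) {l : ℕ}
    (w : Fin (l+1) → ℕ) : ℕ :=
  sInf {n | ∃ f : V → Fin (l+1), WDom G w f ∧ ∑ v, (f v : ℕ) = n}

/-- The Italian domination number `γ_I = γ_{(2,0,0)}`. -/
noncomputable def gammaI {V : Type*} [Fintype V] (G : SimpleGraph V) : ℕ :=
  gammaW G ![2,0,0]

/-- The domination number. -/
noncomputable def gamma {V : Type*} [Fintype V] (G : SimpleGraph V) : ℕ :=
  sInf {n | ∃ S : Finset V, (∀ v, v ∈ S ∨ ∃ u ∈ S, G.Adj u v) ∧ S.card = n}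

/-- The total domination number. -/
noncomputable def gammaT {V : Type*} [Fintype V] (G : SimpleGraph V) : ℕ :=
  sInf {n | ∃ S : Finset V, (∀ v, ∃ u ∈ S, G.Adj u v) ∧ S.card = n}

/-- The 2-domination number. -/
noncomputable def gamma2 {V : Type*} [Fintype V] (G : SimpleGraph V) : ℕ :=
  sInf {n | ∃ S : Finset V, (∀ v ∉ S, 2 ≤ (S.filter (fun u => G.Adj u v)).card) ∧ S.card = n}

/-- The double domination number. -/
noncomputable def gammaX2 {V : Type*} [Fintype V] (G : SimpleGraph V) : ℕ :=
  sInf {n | ∃ S : Finset V, (∀ v, 2 ≤ (S.filter (fun u => u = v ∨ G.Adj u v)).card) ∧ S.card = n}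

/-- The double total domination number. -/
noncomputable def gammaX2T {V : Type*} [Fintype V] (G : SimpleGraph V) : ℕ :=
  sInf {n | ∃ S : Finset V, (∀ v, 2 ≤ (S.filter (fun u => G.Adj u v)).card) ∧ S.card = n}

/-- The lexicographic product `G ∘ H`. -/
def lexProd {V W : Type*} (G : SimpleGraph V) (H : SimpleGraph W) : SimpleGraph (V × W) where
  Adj x y := G.Adj x.1 y.1 ∨ (x.1 = y.1 ∧ H.Adj x.2 y.2)
  symm := by
    constructor
    rintro x y (h | ⟨h1, h2⟩)
    · exact Or.inl h.symm
    · exact Or.inr ⟨h1.symm, h2.symm⟩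
  loopless := by
    constructor
    rintro x (h | ⟨_, h⟩)
    · exact G.irrefl h
    · exact H.irrefl h


lemma fin3_aux1 : ∀ i : Fin 3, (i : ℕ) + ![2,1,0] i = 2 := by decide

lemma fin3_aux2 : ∀ i : Fin 3, ![2,0,0] i ≤ ![2,1,0] i := by decide

lemma fin3_aux3 : ∀ i : Fin 3, ![2,0,0] i ≤ 2 := by decide

lemma min2_sum {ι : Type*} (s : Finset ι) (b : ι → ℕ) :
    min 2 (∑ i ∈ s, b i) ≤ ∑ i ∈ s, min 2 (b i) := by
  induction s using Finset.induction_on with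
  | empty => simp
  | @insert a s h ih =>
    rw [Finset.sum_insert h, Finset.sum_insert h]
    omega

theorem italian_lex_of_gamma_eq_one {V W : Type*} [Fintype V] [Fintype W] [Nontrivial W]
    (G : SimpleGraph V) (H : SimpleGraph W)
    (hG : ∀ v, ∃ u, G.Adj v u) (hH : gamma H = 1) :
    gammaI (lexProd G H) = gammaW G ![2,1,0] := by

  -- dominating vertex of H
  obtain ⟨w₀, hw₀⟩ : ∃ w₀ : W, ∀ y, y = w₀ ∨ H.Adj w₀ y := by
    have hne : {n | ∃ S : Finset W, (∀ v, v ∈ S ∨ ∃ u ∈ S, H.Adj u v) ∧ S.card = n}.Nonempty :=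
      ⟨Fintype.card W, Finset.univ, fun v => Or.inl (Finset.mem_univ v), rfl⟩
    have h1 : gamma H ∈ {n | ∃ S : Finset W, (∀ v, v ∈ S ∨ ∃ u ∈ S, H.Adj u v) ∧ S.card = n} :=
      Nat.sInf_mem hne
    rw [hH] at h1
    obtain ⟨S, hS, hcard⟩ := h1
    obtain ⟨w₀, rfl⟩ := Finset.card_eq_one.mp hcard
    refine ⟨w₀, fun y => ?_⟩
    rcases hS y with h | ⟨u, hu, hadj⟩
    · exact Or.inl (Finset.mem_singleton.mp h)
    · exact Or.inr (by rwa [Finset.mem_singleton.mp hu] at hadj)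
  apply le_antisymm
  · -- gammaI (G∘H) ≤ gammaW G ![2,1,0]
    have hBne : {n | ∃ g : V → Fin 3, WDom G ![2,1,0] g ∧ ∑ v, (g v : ℕ) = n}.Nonempty := by
      refine ⟨∑ v : V, ((2 : Fin 3) : ℕ), fun _ => 2, fun v => ?_, rfl⟩
      have : ![2,1,0] (2 : Fin 3) = 0 := by decide
      rw [this]
      exact Nat.zero_le _
    have hmem : gammaW G ![2,1,0] ∈
        {n | ∃ g : V → Fin 3, WDom G ![2,1,0] g ∧ ∑ v, (g v : ℕ) = n} := Nat.sInf_mem hBne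
    obtain ⟨g, hg, hsum⟩ := hmem
    set F : V × W → Fin 3 := fun p => if p.2 = w₀ then g p.1 else 0 with hFdef
    have hFw₀ : ∀ u : V, F (u, w₀) = g u := fun u => if_pos rfl
    have hF : WDom (lexProd G H) ![2,0,0] F := by
      rintro ⟨v, w⟩
      have hsplit : ∑ u : V, (if (lexProd G H).Adj (v,w) (u,w₀) then (F (u,w₀) : ℕ) else 0)
          ≤ ∑ q : V × W, if (lexProd G H).Adj (v,w) q then (F q : ℕ) else 0 := by
        rw [Fintype.sum_prod_type]
        exact Finset.sum_le_sum fun u _ =>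
          Finset.single_le_sum
            (f := fun y => if (lexProd G H).Adj (v,w) (u,y) then (F (u,y) : ℕ) else 0)
            (fun y _ => Nat.zero_le _) (Finset.mem_univ w₀)
      by_cases hw : w = w₀
      · subst hw
        have hL : ∀ u, (if (lexProd G H).Adj (v,w) (u,w) then (F (u,w) : ℕ) else 0)
            = if G.Adj v u then (g u : ℕ) else 0 := by
          intro u
          have hiff : (lexProd G H).Adj (v,w) (u,w) ↔ G.Adj v u := by
            constructor
            · rintro (h | ⟨_, h⟩)
              · exact h
              · exact absurd h H.irrefl
            · exact Or.inl
          rw [if_congr hiff rfl rfl, hFw₀]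
        calc ![2,0,0] (F (v,w)) = ![2,0,0] (g v) := by rw [hFw₀]
          _ ≤ ![2,1,0] (g v) := fin3_aux2 _
          _ ≤ ∑ u, if G.Adj v u then (g u : ℕ) else 0 := hg v
          _ = ∑ u : V, (if (lexProd G H).Adj (v,w) (u,w) then (F (u,w) : ℕ) else 0) :=
            (Finset.sum_congr rfl fun u _ => hL u).symm
          _ ≤ _ := hsplit
      · have hadj : H.Adj w w₀ := ((hw₀ w).resolve_left hw).symm
        have hadj' : (lexProd G H).Adj (v,w) (v,w₀) := Or.inr ⟨rfl, hadj⟩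
        have hLv : (if (lexProd G H).Adj (v,w) (v,w₀) then (F (v,w₀) : ℕ) else 0) = (g v : ℕ) := by
          rw [if_pos hadj', hFw₀]
        have hLu : ∀ u ∈ Finset.univ.erase v,
            (if (lexProd G H).Adj (v,w) (u,w₀) then (F (u,w₀) : ℕ) else 0)
            = if G.Adj v u then (g u : ℕ) else 0 := by
          intro u hu
          have hne := (Finset.mem_erase.mp hu).1
          have hiff : (lexProd G H).Adj (v,w) (u,w₀) ↔ G.Adj v u := by
            constructor
            · rintro (h | ⟨h1, _⟩)
              · exact h
              · exact absurd h1.symm hne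
            · exact Or.inl
          rw [if_congr hiff rfl rfl, hFw₀]
        have hsum0 : (if G.Adj v v then (g v : ℕ) else 0) = 0 := by
          simp [G.irrefl]
        have hcalc : (g v : ℕ) + ∑ u, (if G.Adj v u then (g u : ℕ) else 0)
            ≤ ∑ u : V, (if (lexProd G H).Adj (v,w) (u,w₀) then (F (u,w₀) : ℕ) else 0) := by
          have heq : (g v : ℕ) + ∑ u, (if G.Adj v u then (g u : ℕ) else 0)
              = ∑ u : V, (if (lexProd G H).Adj (v,w) (u,w₀) then (F (u,w₀) : ℕ) else 0) := by
            calc (g v : ℕ) + ∑ u, (if G.Adj v u then (g u : ℕ) else 0)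
                = (g v : ℕ) + ∑ u ∈ Finset.univ.erase v, (if G.Adj v u then (g u : ℕ) else 0) :=
                  congrArg (HAdd.hAdd (g v : ℕ))
                    (Finset.sum_erase (f := fun u => if G.Adj v u then (g u : ℕ) else 0)
                      Finset.univ hsum0).symm
              _ = (if (lexProd G H).Adj (v,w) (v,w₀) then (F (v,w₀) : ℕ) else 0)
                  + ∑ u ∈ Finset.univ.erase v,
                    (if (lexProd G H).Adj (v,w) (u,w₀) then (F (u,w₀) : ℕ) else 0) := by
                  rw [hLv, Finset.sum_congr rfl hLu]
              _ = ∑ u : V, (if (lexProd G H).Adj (v,w) (u,w₀) then (F (u,w₀) : ℕ) else 0) :=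
                  Finset.add_sum_erase _
                    (fun u => if (lexProd G H).Adj (v,w) (u,w₀) then (F (u,w₀) : ℕ) else 0)
                    (Finset.mem_univ v)
          exact le_of_eq heq
        have h2 : 2 ≤ (g v : ℕ) + ∑ u, (if G.Adj v u then (g u : ℕ) else 0) := by
          have h3 := hg v
          have haux := fin3_aux1 (g v)
          omega
        exact le_trans (fin3_aux3 _) (le_trans h2 (le_trans hcalc hsplit))
    have hFsum : ∑ p : V × W, (F p : ℕ) = gammaW G ![2,1,0] := by
      rw [Fintype.sum_prod_type, ← hsum]
      refine Finset.sum_congr rfl fun v _ => ?_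
      have : ∀ y : W, (F (v, y) : ℕ) = if y = w₀ then (g v : ℕ) else 0 := by
        intro y
        by_cases h : y = w₀ <;> simp [hFdef, h]
      rw [Finset.sum_congr rfl fun y _ => this y, Finset.sum_ite_eq' Finset.univ w₀]
      simp
    exact Nat.sInf_le ⟨F, hF, hFsum⟩
  · -- gammaW G ![2,1,0] ≤ gammaI (G∘H)
    have hAne : {n | ∃ f : V × W → Fin 3, WDom (lexProd G H) ![2,0,0] f ∧
        ∑ p, (f p : ℕ) = n}.Nonempty := by
      refine ⟨∑ p : V × W, ((2 : Fin 3) : ℕ), fun _ => 2, fun p => ?_, rfl⟩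
      have : ![2,0,0] (2 : Fin 3) = 0 := by decide
      rw [this]
      exact Nat.zero_le _
    have hmem : gammaI (lexProd G H) ∈
        {n | ∃ f : V × W → Fin 3, WDom (lexProd G H) ![2,0,0] f ∧ ∑ p, (f p : ℕ) = n} :=
      Nat.sInf_mem hAne
    obtain ⟨f, hf, hsum⟩ := hmem
    set s : V → ℕ := fun v => ∑ y, (f (v, y) : ℕ) with hs
    set g : V → Fin 3 := fun v => ⟨min 2 (s v), by omega⟩ with hgdef
    have hgval : ∀ v, (g v : ℕ) = min 2 (s v) := fun v => rfl
    have hbound : ∀ (v : V) (w : W),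
        (∑ q : V × W, if (lexProd G H).Adj (v,w) q then (f q : ℕ) else 0)
        ≤ (∑ u, if G.Adj v u then s u else 0) + s v := by
      intro v w
      rw [Fintype.sum_prod_type]
      have hterm : ∀ u : V, (∑ y, if (lexProd G H).Adj (v,w) (u,y) then (f (u,y) : ℕ) else 0)
          ≤ (if G.Adj v u then s u else 0) + (if u = v then s u else 0) := by
        intro u
        have h1 : ∀ y, (if (lexProd G H).Adj (v,w) (u,y) then (f (u,y) : ℕ) else 0)
            ≤ (if G.Adj v u then (f (u,y) : ℕ) else 0) + (if u = v then (f (u,y) : ℕ) else 0) := by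
          intro y
          by_cases hadj : (lexProd G H).Adj (v,w) (u,y)
          · rw [if_pos hadj]
            rcases hadj with h | ⟨h, _⟩
            · rw [if_pos h]; exact Nat.le_add_right _ _
            · rw [if_pos h.symm]
              by_cases h2 : G.Adj v u
              · rw [if_pos h2]; exact Nat.le_add_left _ _
              · rw [if_neg h2]; omega
          · rw [if_neg hadj]
            exact Nat.zero_le _
        calc (∑ y, if (lexProd G H).Adj (v,w) (u,y) then (f (u,y) : ℕ) else 0)
            ≤ ∑ y, ((if G.Adj v u then (f (u,y) : ℕ) else 0)
                + (if u = v then (f (u,y) : ℕ) else 0)) := Finset.sum_le_sum fun y _ => h1 y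
          _ = (if G.Adj v u then s u else 0) + (if u = v then s u else 0) := by
              rw [Finset.sum_add_distrib]
              congr 1
              · by_cases h : G.Adj v u <;> simp [h, hs]
              · by_cases h : u = v <;> simp [h, hs]
      calc (∑ u : V, ∑ y, if (lexProd G H).Adj (v,w) (u,y) then (f (u,y) : ℕ) else 0)
          ≤ ∑ u : V, ((if G.Adj v u then s u else 0) + (if u = v then s u else 0)) :=
            Finset.sum_le_sum fun u _ => hterm u
        _ = (∑ u, if G.Adj v u then s u else 0) + ∑ u : V, (if u = v then s u else 0) :=
            Finset.sum_add_distrib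
        _ = (∑ u, if G.Adj v u then s u else 0) + s v := by
            rw [Finset.sum_ite_eq' Finset.univ v s]
            simp
    have hWg : WDom G ![2,1,0] g := by
      intro v
      have hmin : min 2 (∑ u, if G.Adj v u then s u else 0)
          ≤ ∑ u, if G.Adj v u then (g u : ℕ) else 0 := by
        calc min 2 (∑ u, if G.Adj v u then s u else 0)
            ≤ ∑ u, min 2 (if G.Adj v u then s u else 0) := min2_sum _ _
          _ = ∑ u, if G.Adj v u then (g u : ℕ) else 0 := by
              refine Finset.sum_congr rfl fun u _ => ?_
              by_cases h : G.Adj v u <;> simp [h, hgval]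
      have haux := fin3_aux1 (g v)
      have hgv := hgval v
      rcases Nat.lt_or_ge (s v) 2 with hsv | hsv
      · have hsv01 : s v = 0 ∨ s v = 1 := by omega
        rcases hsv01 with hv | hv
        · -- s v = 0
          obtain ⟨w⟩ := (inferInstance : Nonempty W)
          have hfle : (f (v,w) : ℕ) ≤ s v :=
            Finset.single_le_sum (f := fun y => (f (v,y) : ℕ)) (fun y _ => Nat.zero_le _)
              (Finset.mem_univ w)
          have hf0 : f (v, w) = 0 := by
            have h0 : (f (v,w) : ℕ) = 0 := by omega
            exact Fin.ext (by simp [h0])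
          have h2 := hf (v, w)
          rw [hf0] at h2
          have h2' : (2 : ℕ) ≤ ∑ q : V × W, if (lexProd G H).Adj (v,w) q then (f q : ℕ) else 0 := by
            have he : ![2,0,0] (0 : Fin 3) = 2 := by decide
            omega
          have hb := hbound v w
          omega
        · -- s v = 1
          have hex : ∃ w₁, (f (v, w₁) : ℕ) ≠ 0 := by
            by_contra h
            push_neg at h
            have h0 : s v = 0 := Finset.sum_eq_zero fun y _ => h y
            omega
          obtain ⟨w₁, hw₁⟩ := hex
          obtain ⟨w, hwne⟩ := exists_ne w₁
          have hpair : (f (v,w) : ℕ) + (f (v,w₁) : ℕ) ≤ s v := by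
            have h3 := Finset.sum_le_sum_of_subset (f := fun y => (f (v,y) : ℕ))
              (Finset.subset_univ {w, w₁})
            rwa [Finset.sum_pair hwne] at h3
          have hf0 : f (v, w) = 0 := by
            have h0 : (f (v,w) : ℕ) = 0 := by omega
            exact Fin.ext (by simp [h0])
          have h2 := hf (v, w)
          rw [hf0] at h2
          have h2' : (2 : ℕ) ≤ ∑ q : V × W, if (lexProd G H).Adj (v,w) q then (f q : ℕ) else 0 := by
            have he : ![2,0,0] (0 : Fin 3) = 2 := by decide
            omega
          have hb := hbound v w
          omega
      · omega
    have hweight : ∑ v, (g v : ℕ) ≤ gammaI (lexProd G H) := by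
      calc ∑ v, (g v : ℕ) ≤ ∑ v, s v := Finset.sum_le_sum fun v _ => by
            rw [hgval]; exact min_le_right _ _
        _ = ∑ p : V × W, (f p : ℕ) := by rw [Fintype.sum_prod_type]
        _ = gammaI (lexProd G H) := hsum
    exact le_trans (Nat.sInf_le ⟨g, hWg, rfl⟩) hweight
end

section
/- Let G be a graph with no isolated vertex and H a nontrivial graph with γ_2(H) > γ(H) = 2, and assume γ_I(H) ≠ 3 or γ(H) ≠ 3. Then γ_I(G∘H) = γ_{(2,2,1)}(G). -/
open scoped Classical
open Finset SimpleGraph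

lemma w221_val : ∀ i : Fin 3, (![2,2,1] : Fin 3 → ℕ) i = if (i:ℕ) = 2 then 1 else 2 := by decide

lemma w200_val : ∀ i : Fin 3, (![2,0,0] : Fin 3 → ℕ) i = if (i:ℕ) = 0 then 2 else 0 := by decide

section Helpers
variable {V W : Type*} [Fintype V] [Fintype W]

lemma lexAdj (G : SimpleGraph V) (H : SimpleGraph W) (p q : V × W) :
    (lexProd G H).Adj p q ↔ G.Adj p.1 q.1 ∨ (p.1 = q.1 ∧ H.Adj p.2 q.2) := Iff.rfl

/-- Splitting the neighbourhood sum in the lexicographic product. -/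
lemma lex_split (G : SimpleGraph V) (H : SimpleGraph W) (g : V × W → Fin 3) (v : V) (x : W) :
    ∑ p : V × W, (if (lexProd G H).Adj (v,x) p then (g p : ℕ) else 0)
      = (∑ u, if G.Adj v u then (∑ y, (g (u,y) : ℕ)) else 0)
        + ∑ y, (if H.Adj x y then (g (v,y) : ℕ) else 0) := by
  rw [Fintype.sum_prod_type]
  have key : ∀ u, (∑ y, if (lexProd G H).Adj (v,x) (u,y) then (g (u,y) : ℕ) else 0)
      = (if G.Adj v u then (∑ y, (g (u,y) : ℕ)) else 0)
        + (if u = v then ∑ y, (if H.Adj x y then (g (v,y) : ℕ) else 0) else 0) := by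
    intro u
    by_cases hadj : G.Adj v u
    · have huv : u ≠ v := fun h => G.irrefl (h ▸ hadj)
      rw [if_pos hadj, if_neg huv, add_zero]
      refine Finset.sum_congr rfl fun y _ => ?_
      rw [if_pos (show (lexProd G H).Adj (v,x) (u,y) from Or.inl hadj)]
    · by_cases huv : u = v
      · subst huv
        rw [if_neg hadj, if_pos rfl, zero_add]
        refine Finset.sum_congr rfl fun y _ => ?_
        have hiff : (lexProd G H).Adj (u,x) (u,y) ↔ H.Adj x y := by
          rw [lexAdj]
          constructor
          · rintro (h | ⟨_, h⟩)
            · exact absurd h hadj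
            · exact h
          · exact fun h => Or.inr ⟨rfl, h⟩
        by_cases h : H.Adj x y
        · rw [if_pos (hiff.mpr h), if_pos h]
        · rw [if_neg (fun hc => h (hiff.mp hc)), if_neg h]
      · rw [if_neg hadj, if_neg huv, add_zero]
        refine Finset.sum_eq_zero fun y _ => ?_
        rw [if_neg]
        rintro (h | ⟨h, _⟩)
        · exact hadj h
        · exact huv h.symm
  rw [Finset.sum_congr rfl fun u _ => key u, Finset.sum_add_distrib]
  congr 1
  simp

/-- Truncation at 2 preserves "sum at least 2". -/
lemma two_le_sum_min (G : SimpleGraph V) (ω : V → ℕ) (v : V)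
    (h : 2 ≤ ∑ u, if G.Adj v u then ω u else 0) :
    2 ≤ ∑ u, if G.Adj v u then min (ω u) 2 else 0 := by
  by_cases hx : ∃ u, G.Adj v u ∧ 2 ≤ ω u
  · obtain ⟨u, hu, h2⟩ := hx
    calc (2:ℕ) = (if G.Adj v u then min (ω u) 2 else 0) := by
          rw [if_pos hu, min_eq_right h2]
      _ ≤ _ := Finset.single_le_sum (f := fun u => if G.Adj v u then min (ω u) 2 else 0)
          (fun _ _ => Nat.zero_le _) (Finset.mem_univ u)
  · push_neg at hx
    calc (2:ℕ) ≤ ∑ u, if G.Adj v u then ω u else 0 := h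
      _ = ∑ u, if G.Adj v u then min (ω u) 2 else 0 := by
          refine Finset.sum_congr rfl fun u _ => ?_
          by_cases hadj : G.Adj v u
          · have h1 := hx u hadj
            rw [if_pos hadj, if_pos hadj, min_eq_left (by omega)]
          · rw [if_neg hadj, if_neg hadj]


/-- Any Italian dominating function on `H` (with `γ(H)=2`, `γ₂(H)>2`) has weight at least 3. -/
lemma italian_H_ge_three (H : SimpleGraph W) [Nontrivial W] (hH2 : 2 < gamma2 H)
    (hH : gamma H = 2) (h : W → Fin 3) (hdom : WDom H ![2,0,0] h) :
    3 ≤ ∑ x, (h x : ℕ) := by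
  by_contra hlt
  push_neg at hlt
  have hsum2 : ∑ x, (h x : ℕ) ≤ 2 := by omega
  have hcond : ∀ x, (h x : ℕ) = 0 → 2 ≤ ∑ y, if H.Adj x y then (h y : ℕ) else 0 := by
    intro x hx
    have := hdom x
    rwa [w200_val, if_pos hx] at this
  by_cases hA : ∃ a, 2 ≤ (h a : ℕ)
  · obtain ⟨a, ha⟩ := hA
    have ha2 : (h a : ℕ) = 2 := le_antisymm (Fin.is_le _) ha
    have hrest : ∀ x, x ≠ a → (h x : ℕ) = 0 := by
      intro x hx
      have hsplit : (∑ y ∈ Finset.univ.erase a, (h y : ℕ)) + (h a : ℕ) = ∑ x, (h x : ℕ) :=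
        Finset.sum_erase_add _ _ (Finset.mem_univ a)
      have hz : ∑ y ∈ Finset.univ.erase a, (h y : ℕ) = 0 := by omega
      exact Finset.sum_eq_zero_iff.mp hz x (Finset.mem_erase.mpr ⟨hx, Finset.mem_univ x⟩)
    have hadj : ∀ x, x ≠ a → H.Adj a x := by
      intro x hx
      have h2 := hcond x (hrest x hx)
      have hle : (∑ y, if H.Adj x y then (h y : ℕ) else 0)
          ≤ ∑ y, if y = a then (if H.Adj x a then 2 else 0) else 0 := by
        refine Finset.sum_le_sum fun y _ => ?_
        by_cases hy : y = a
        · subst hy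
          by_cases hxy : H.Adj x y
          · rw [if_pos hxy, if_pos rfl, if_pos hxy, ha2]
          · rw [if_neg hxy, if_pos rfl]; exact Nat.zero_le _
        · rw [if_neg hy]
          by_cases hxy : H.Adj x y
          · rw [if_pos hxy, hrest y hy]
          · rw [if_neg hxy]
      rw [Finset.sum_ite_eq' Finset.univ a, if_pos (Finset.mem_univ a)] at hle
      by_cases hxa : H.Adj x a
      · exact hxa.symm
      · rw [if_neg hxa] at hle; omega
    have hdomset : gamma H ≤ 1 := by
      refine Nat.sInf_le ⟨{a}, fun v => ?_, Finset.card_singleton a⟩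
      by_cases hv : v = a
      · exact Or.inl (by simp [hv])
      · exact Or.inr ⟨a, Finset.mem_singleton_self a, hadj v hv⟩
    omega
  · push_neg at hA
    set S : Finset W := Finset.univ.filter (fun x => (h x : ℕ) = 1) with hS
    have hcardS : S.card = ∑ x, (h x : ℕ) := by
      rw [Finset.card_eq_sum_ones]
      rw [← Finset.sum_filter_add_sum_filter_not Finset.univ (fun x => (h x : ℕ) = 1)
        (fun x => (h x : ℕ))]
      have h1 : ∑ x ∈ S, (1:ℕ) = ∑ x ∈ S, (h x : ℕ) := by
        refine Finset.sum_congr rfl fun x hx => ?_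
        rw [(Finset.mem_filter.mp hx).2]
      have h2 : ∑ x ∈ Finset.univ.filter (fun x => ¬ (h x : ℕ) = 1), (h x : ℕ) = 0 := by
        refine Finset.sum_eq_zero fun x hx => ?_
        have := (Finset.mem_filter.mp hx).2
        have := hA x
        omega
      rw [h1, h2, add_zero]
    have h2dom : ∀ x ∉ S, 2 ≤ (S.filter (fun u => H.Adj u x)).card := by
      intro x hx
      have hx0 : (h x : ℕ) = 0 := by
        have := hA x
        have : ¬ ((h x : ℕ) = 1) := fun hc => hx (Finset.mem_filter.mpr ⟨Finset.mem_univ x, hc⟩)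
        omega
      have h2 := hcond x hx0
      have hle : (∑ y, if H.Adj x y then (h y : ℕ) else 0)
          ≤ ∑ y, (if y ∈ S.filter (fun u => H.Adj u x) then (1:ℕ) else 0) := by
        refine Finset.sum_le_sum fun y _ => ?_
        by_cases hxy : H.Adj x y
        · rw [if_pos hxy]
          by_cases hy1 : (h y : ℕ) = 1
          · have hymem : y ∈ S.filter (fun u => H.Adj u x) := by
              simp only [hS, Finset.mem_filter, Finset.mem_univ, true_and]
              exact ⟨hy1, hxy.symm⟩
            rw [if_pos hymem, hy1]
          · have := hA y
            omega
        · rw [if_neg hxy]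
          exact Nat.zero_le _
      simp only [Finset.sum_ite_mem, Finset.univ_inter, Finset.sum_const, smul_eq_mul,
        mul_one] at hle
      omega
    have : gamma2 H ≤ S.card := Nat.sInf_le ⟨S, h2dom, rfl⟩
    omega


/-- From a (2,2,1)-dominating function on `G`, build an Italian function on `G∘H` of equal weight. -/
lemma exists_italian_of_w221 (G : SimpleGraph V) (H : SimpleGraph W)
    (hH : gamma H = 2) (f : V → Fin 3) (hf : WDom G ![2,2,1] f) :
    ∃ g : V × W → Fin 3, WDom (lexProd G H) ![2,0,0] g ∧
      ∑ p, (g p : ℕ) = ∑ v, (f v : ℕ) := by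
  -- a dominating set of cardinality 2
  have hne : {n | ∃ S : Finset W, (∀ v, v ∈ S ∨ ∃ u ∈ S, H.Adj u v) ∧ S.card = n}.Nonempty :=
    ⟨(Finset.univ : Finset W).card, Finset.univ, fun v => Or.inl (Finset.mem_univ v), rfl⟩
  have hmem := Nat.sInf_mem hne
  rw [← gamma, hH] at hmem
  obtain ⟨S, hSdom, hScard⟩ := hmem
  obtain ⟨a, b, hab, rfl⟩ := Finset.card_eq_two.mp hScard
  set g : V × W → Fin 3 := fun p =>
    if ((f p.1 : ℕ) = 2 ∧ (p.2 = a ∨ p.2 = b)) ∨ ((f p.1 : ℕ) = 1 ∧ p.2 = a) then 1 else 0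
    with hg
  have hgval : ∀ (v : V) (y : W), (g (v,y) : ℕ) =
      if ((f v : ℕ) = 2 ∧ (y = a ∨ y = b)) ∨ ((f v : ℕ) = 1 ∧ y = a) then 1 else 0 := by
    intro v y
    rw [hg]
    dsimp only
    split_ifs <;> rfl
  have hcopy : ∀ v, (∑ y, (g (v,y) : ℕ)) = (f v : ℕ) := by
    intro v
    have hle : (f v : ℕ) ≤ 2 := Fin.is_le _
    have h3 : (f v : ℕ) = 0 ∨ (f v : ℕ) = 1 ∨ (f v : ℕ) = 2 := by omega
    rcases h3 with h0 | h1 | h2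
    · rw [h0]
      refine Finset.sum_eq_zero fun y _ => ?_
      rw [hgval]
      rw [if_neg]
      rintro (⟨hc, _⟩ | ⟨hc, _⟩) <;> omega
    · rw [h1]
      have : ∀ y, (g (v,y) : ℕ) = if y = a then 1 else 0 := by
        intro y
        rw [hgval]
        by_cases hy : y = a
        · rw [if_pos hy, if_pos (Or.inr ⟨h1, hy⟩)]
        · rw [if_neg hy, if_neg]
          rintro (⟨hc, _⟩ | ⟨_, hc⟩)
          · omega
          · exact hy hc
      rw [Finset.sum_congr rfl fun y _ => this y, Finset.sum_ite_eq' Finset.univ a,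
        if_pos (Finset.mem_univ a)]
    · rw [h2]
      have : ∀ y, (g (v,y) : ℕ) = (if y = a then 1 else 0) + (if y = b then 1 else 0) := by
        intro y
        rw [hgval]
        by_cases hya : y = a
        · subst hya
          rw [if_pos (Or.inl ⟨h2, Or.inl rfl⟩), if_pos rfl, if_neg hab]
        · by_cases hyb : y = b
          · subst hyb
            rw [if_pos (Or.inl ⟨h2, Or.inr rfl⟩), if_neg hya, if_pos rfl]
          · rw [if_neg hya, if_neg hyb, if_neg]
            rintro (⟨_, hc | hc⟩ | ⟨hc, _⟩)
            · exact hya hc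
            · exact hyb hc
            · omega
      rw [Finset.sum_congr rfl fun y _ => this y, Finset.sum_add_distrib,
        Finset.sum_ite_eq' Finset.univ a, Finset.sum_ite_eq' Finset.univ b,
        if_pos (Finset.mem_univ a), if_pos (Finset.mem_univ b)]
  refine ⟨g, ?_, ?_⟩
  · intro p
    obtain ⟨v, x⟩ := p
    rw [w200_val]
    by_cases hgz : (g (v,x) : ℕ) = 0
    swap
    · rw [if_neg hgz]; exact Nat.zero_le _
    rw [if_pos hgz, lex_split]
    have hext := hf v
    rw [w221_val] at hext
    have hextf : (∑ u, if G.Adj v u then (∑ y, (g (u,y) : ℕ)) else 0)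
        = ∑ u, if G.Adj v u then (f u : ℕ) else 0 := by
      refine Finset.sum_congr rfl fun u _ => ?_
      by_cases hadj : G.Adj v u
      · rw [if_pos hadj, if_pos hadj, hcopy]
      · rw [if_neg hadj, if_neg hadj]
    rw [hextf]
    by_cases h2 : (f v : ℕ) = 2
    · rw [if_pos h2] at hext
      -- internal contribution at least 1
      have hxab : ¬ (x = a ∨ x = b) := by
        intro hc
        rw [hgval] at hgz
        rw [if_pos (Or.inl ⟨h2, hc⟩)] at hgz
        omega
      have hdx := hSdom x
      have hxnS : x ∉ ({a, b} : Finset W) := by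
        intro hc
        rcases Finset.mem_insert.mp hc with hc | hc
        · exact hxab (Or.inl hc)
        · exact hxab (Or.inr (Finset.mem_singleton.mp hc))
      rcases hdx with hc | ⟨u, huS, hadj⟩
      · exact absurd hc hxnS
      · have hgu : (g (v,u) : ℕ) = 1 := by
          rw [hgval]
          rcases Finset.mem_insert.mp huS with hc | hc
          · exact if_pos (Or.inl ⟨h2, Or.inl hc⟩)
          · exact if_pos (Or.inl ⟨h2, Or.inr (Finset.mem_singleton.mp hc)⟩)
        have hint : 1 ≤ ∑ y, (if H.Adj x y then (g (v,y) : ℕ) else 0) := by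
          calc (1:ℕ) = (if H.Adj x u then (g (v,u) : ℕ) else 0) := by
                rw [if_pos hadj.symm, hgu]
            _ ≤ _ := Finset.single_le_sum (f := fun y => if H.Adj x y then (g (v,y) : ℕ) else 0)
                (fun _ _ => Nat.zero_le _) (Finset.mem_univ u)
        omega
    · rw [if_neg h2] at hext
      omega
  · rw [Fintype.sum_prod_type]
    exact Finset.sum_congr rfl fun v _ => hcopy v


/-- From an Italian function on `G∘H`, build a (2,2,1)-dominating function on `G`
of at most the same weight. -/
lemma exists_w221_of_italian (G : SimpleGraph V) (H : SimpleGraph W) [Nontrivial W]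
    (hG : ∀ v, ∃ u, G.Adj v u) (hH2 : 2 < gamma2 H) (hH : gamma H = 2)
    (g : V × W → Fin 3) (hg : WDom (lexProd G H) ![2,0,0] g) :
    ∃ f : V → Fin 3, WDom G ![2,2,1] f ∧ ∑ v, (f v : ℕ) ≤ ∑ p, (g p : ℕ) := by
  classical
  set ω : V → ℕ := fun v => ∑ y, (g (v,y) : ℕ) with hω
  choose nb hnb using hG
  -- the Italian condition, split
  have hcond : ∀ v x, (g (v,x) : ℕ) = 0 →
      2 ≤ (∑ u, if G.Adj v u then ω u else 0) + ∑ y, (if H.Adj x y then (g (v,y) : ℕ) else 0) := by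
    intro v x hx
    have h := hg (v,x)
    rw [w200_val, if_pos hx, lex_split] at h
    exact h
  -- copies of weight 0 receive external weight at least 2
  have L1 : ∀ v, ω v = 0 → 2 ≤ ∑ u, if G.Adj v u then ω u else 0 := by
    intro v hv
    have hall : ∀ y, (g (v,y) : ℕ) = 0 := fun y =>
      Finset.sum_eq_zero_iff.mp hv y (Finset.mem_univ y)
    obtain ⟨x⟩ := (inferInstance : Nonempty W)
    have h2 := hcond v x (hall x)
    have hint : (∑ y, if H.Adj x y then (g (v,y) : ℕ) else 0) = 0 :=
      Finset.sum_eq_zero fun y _ => by rw [hall y, ite_self]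
    omega
  -- copies of weight 1 receive external weight at least 2
  have L2 : ∀ v, ω v = 1 → 2 ≤ ∑ u, if G.Adj v u then ω u else 0 := by
    intro v hv
    have hex : ∃ a, 1 ≤ (g (v,a) : ℕ) := by
      by_contra hc
      push_neg at hc
      have : ω v = 0 := Finset.sum_eq_zero fun y _ => by have := hc y; omega
      omega
    obtain ⟨a, ha⟩ := hex
    have hrest : ∀ y, y ≠ a → (g (v,y) : ℕ) = 0 := by
      intro y hy
      have hsplit : (∑ z ∈ Finset.univ.erase a, (g (v,z) : ℕ)) + (g (v,a) : ℕ)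
          = ∑ z, (g (v,z) : ℕ) := Finset.sum_erase_add _ _ (Finset.mem_univ a)
      have hz : ∑ z ∈ Finset.univ.erase a, (g (v,z) : ℕ) = 0 := by
        have hv' : ∑ z, (g (v,z) : ℕ) = 1 := hv
        omega
      exact Finset.sum_eq_zero_iff.mp hz y (Finset.mem_erase.mpr ⟨hy, Finset.mem_univ y⟩)
    -- there is a vertex not dominated by `a` inside the copy
    have hex2 : ∃ x, x ≠ a ∧ ¬ H.Adj a x := by
      by_contra hc
      push_neg at hc
      have : gamma H ≤ 1 := by
        refine Nat.sInf_le ⟨{a}, fun w => ?_, Finset.card_singleton a⟩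
        by_cases hw : w = a
        · exact Or.inl (by simp [hw])
        · exact Or.inr ⟨a, Finset.mem_singleton_self a, hc w hw⟩
      omega
    obtain ⟨x, hxa, hnadj⟩ := hex2
    have h2 := hcond v x (hrest x hxa)
    have hint : (∑ y, if H.Adj x y then (g (v,y) : ℕ) else 0) = 0 := by
      refine Finset.sum_eq_zero fun y _ => ?_
      by_cases hy : y = a
      · subst hy
        rw [if_neg (fun hc => hnadj hc.symm)]
      · rw [hrest y hy, ite_self]
    omega
  -- "bad" vertices: heavy copies whose external neighbourhood is empty
  set Bad : V → Prop := fun v => 2 ≤ ω v ∧ ∀ u, G.Adj v u → ω u = 0 with hBad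
  have L3 : ∀ v, Bad v → 3 ≤ ω v := by
    intro v hv
    refine italian_H_ge_three H hH2 hH (fun y => g (v,y)) ?_
    intro x
    rw [w200_val]
    by_cases hx : (g (v,x) : ℕ) = 0
    · rw [if_pos hx]
      have h2 := hcond v x hx
      have hext : (∑ u, if G.Adj v u then ω u else 0) = 0 := by
        refine Finset.sum_eq_zero fun u _ => ?_
        by_cases hadj : G.Adj v u
        · rw [if_pos hadj, hv.2 u hadj]
        · rw [if_neg hadj]
      have hgoal : 2 ≤ ∑ y, if H.Adj x y then (g (v,y) : ℕ) else 0 := by omega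
      exact hgoal
    · rw [if_neg hx]
      exact Nat.zero_le _
  set F : V → ℕ := fun v => min (ω v) 2 with hF
  set F' : V → ℕ := fun v => if ∃ b, Bad b ∧ nb b = v then max (F v) 1 else F v with hF'
  have hF2 : ∀ v, F v ≤ 2 := fun v => min_le_right _ _
  have hF'2 : ∀ v, F' v ≤ 2 := by
    intro v
    rw [hF']
    dsimp only
    split_ifs with h
    · exact max_le (hF2 v) one_le_two
    · exact hF2 v
  have hFF' : ∀ v, F v ≤ F' v := by
    intro v
    rw [hF']
    dsimp only
    split_ifs with h
    · exact le_max_left _ _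
    · exact le_rfl
  have hFω : ∀ v, F v ≤ ω v := fun v => min_le_left _ _
  refine ⟨fun v => ⟨F' v, Nat.lt_succ_of_le (hF'2 v)⟩, ?_, ?_⟩
  · -- WDom G ![2,2,1]
    intro v
    rw [w221_val]
    have hval : ((⟨F' v, Nat.lt_succ_of_le (hF'2 v)⟩ : Fin 3) : ℕ) = F' v := rfl
    rw [hval]
    have hsum_val : (∑ u, if G.Adj v u then ((fun w => (⟨F' w, Nat.lt_succ_of_le (hF'2 w)⟩ : Fin 3)) u : ℕ) else 0)
        = ∑ u, if G.Adj v u then F' u else 0 := rfl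
    have hmono : (∑ u, if G.Adj v u then F u else 0) ≤ ∑ u, if G.Adj v u then F' u else 0 := by
      refine Finset.sum_le_sum fun u _ => ?_
      by_cases hadj : G.Adj v u
      · rw [if_pos hadj, if_pos hadj]; exact hFF' u
      · rw [if_neg hadj, if_neg hadj]
    by_cases h2 : F' v = 2
    · rw [if_pos h2]
      have hFv : F v = 2 := by
        rw [hF'] at h2
        dsimp only at h2
        split_ifs at h2 with h
        · have := hF2 v; omega
        · exact h2
      have hωv : 2 ≤ ω v := by
        have h := min_le_left (ω v) 2
        rw [hF] at hFv
        dsimp only at hFv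
        omega
      by_cases hb : Bad v
      · have h1 : 1 ≤ F' (nb v) := by
          rw [hF']
          dsimp only
          rw [if_pos ⟨v, hb, rfl⟩]
          exact le_max_right _ _
        calc (1:ℕ) ≤ (if G.Adj v (nb v) then F' (nb v) else 0) := by
              rw [if_pos (hnb v)]; exact h1
          _ ≤ _ := Finset.single_le_sum (f := fun u => if G.Adj v u then F' u else 0)
              (fun _ _ => Nat.zero_le _) (Finset.mem_univ (nb v))
      · have hex : ∃ u, G.Adj v u ∧ ω u ≠ 0 := by
          by_contra hc
          push_neg at hc
          exact hb ⟨hωv, fun u hu => hc u hu⟩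
        obtain ⟨u, hadj, hωu⟩ := hex
        have h1 : 1 ≤ F' u := le_trans (by rw [hF]; dsimp only; omega) (hFF' u)
        calc (1:ℕ) ≤ (if G.Adj v u then F' u else 0) := by rw [if_pos hadj]; exact h1
          _ ≤ _ := Finset.single_le_sum (f := fun u => if G.Adj v u then F' u else 0)
              (fun _ _ => Nat.zero_le _) (Finset.mem_univ u)
    · rw [if_neg h2]
      have hωv : ω v ≤ 1 := by
        have hFv : F v ≤ 1 := by
          have := hFF' v
          have := hF'2 v
          omega
        rw [hF] at hFv
        dsimp only at hFv
        omega
      have hext : 2 ≤ ∑ u, if G.Adj v u then ω u else 0 := by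
        rcases Nat.le_one_iff_eq_zero_or_eq_one.mp hωv with h | h
        · exact L1 v h
        · exact L2 v h
      exact le_trans (two_le_sum_min G ω v hext) hmono
  · -- weight bound
    have hstep1 : ∀ v, F' v ≤ F v + (if v ∈ (Finset.univ.filter Bad).image nb then 1 else 0) := by
      intro v
      rw [hF']
      dsimp only
      split_ifs with h h2 h2
      · exact max_le (by omega) (by omega)
      · obtain ⟨b, hb, hbv⟩ := h
        exact absurd (Finset.mem_image.mpr ⟨b, Finset.mem_filter.mpr ⟨Finset.mem_univ b, hb⟩, hbv⟩) h2
      · omega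
      · omega
    have himg : (∑ v, if v ∈ (Finset.univ.filter Bad).image nb then (1:ℕ) else 0)
        = ((Finset.univ.filter Bad).image nb).card := by
      simp only [Finset.sum_ite_mem, Finset.univ_inter, Finset.sum_const, smul_eq_mul, mul_one]
    have hbadc : (∑ v, if Bad v then (1:ℕ) else 0) = (Finset.univ.filter Bad).card := by
      rw [Finset.card_eq_sum_ones, Finset.sum_filter]
    have hptwise : ∀ v, F v + (if Bad v then (1:ℕ) else 0) ≤ ω v := by
      intro v
      by_cases hb : Bad v
      · rw [if_pos hb]
        have h3 := L3 v hb
        have := hF2 v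
        omega
      · rw [if_neg hb, add_zero]
        exact hFω v
    have hfinal : ∑ v, F' v ≤ ∑ v, ω v := by
      calc ∑ v, F' v ≤ ∑ v, (F v + if v ∈ (Finset.univ.filter Bad).image nb then (1:ℕ) else 0) :=
            Finset.sum_le_sum fun v _ => hstep1 v
        _ = (∑ v, F v) + ∑ v, (if v ∈ (Finset.univ.filter Bad).image nb then (1:ℕ) else 0) :=
            Finset.sum_add_distrib
        _ ≤ (∑ v, F v) + (Finset.univ.filter Bad).card := by
            rw [himg]
            exact Nat.add_le_add_left (Finset.card_image_le) _
        _ = (∑ v, F v) + ∑ v, (if Bad v then (1:ℕ) else 0) := by rw [hbadc]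
        _ = ∑ v, (F v + if Bad v then (1:ℕ) else 0) := Finset.sum_add_distrib.symm
        _ ≤ ∑ v, ω v := Finset.sum_le_sum fun v _ => hptwise v
    have hωsum : ∑ v, ω v = ∑ p, (g p : ℕ) := by
      rw [Fintype.sum_prod_type]
    have hvals : (∑ v, ((fun w => (⟨F' w, Nat.lt_succ_of_le (hF'2 w)⟩ : Fin 3)) v : ℕ))
        = ∑ v, F' v := rfl
    rw [hvals]
    omega

end Helpers

theorem italian_lex_of_gamma2_gt_two {V W : Type*} [Fintype V] [Fintype W] [Nontrivial W]
    (G : SimpleGraph V) (H : SimpleGraph W)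
    (hG : ∀ v, ∃ u, G.Adj v u) (hH2 : 2 < gamma2 H) (hH : gamma H = 2)
    (hHI : gammaI H ≠ 3 ∨ gamma H ≠ 3) :
    gammaI (lexProd G H) = gammaW G ![2,2,1] := by
  have hne2 : {n | ∃ f : V → Fin 3, WDom G ![2,2,1] f ∧ ∑ v, (f v : ℕ) = n}.Nonempty := by
    refine ⟨_, (fun _ => (2 : Fin 3)), ?_, rfl⟩
    intro v
    rw [w221_val]
    rw [show (((2:Fin 3)):ℕ) = 2 from rfl, if_pos rfl]
    obtain ⟨u, hu⟩ := hG v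
    calc (1:ℕ) ≤ (if G.Adj v u then (((2:Fin 3)):ℕ) else 0) := by
          rw [if_pos hu]
          norm_num
      _ ≤ _ := Finset.single_le_sum
          (f := fun u => if G.Adj v u then (((2:Fin 3)):ℕ) else 0)
          (fun _ _ => Nat.zero_le _) (Finset.mem_univ u)
  have hne1 : {n | ∃ g : V × W → Fin 3, WDom (lexProd G H) ![2,0,0] g ∧
      ∑ p, (g p : ℕ) = n}.Nonempty := by
    refine ⟨_, (fun _ => (2 : Fin 3)), ?_, rfl⟩
    intro p
    rw [w200_val]
    rw [show (((2:Fin 3)):ℕ) = 2 from rfl, if_neg (by omega)]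
    exact Nat.zero_le _
  apply le_antisymm
  · obtain ⟨f, hf, hsum⟩ := Nat.sInf_mem hne2
    obtain ⟨g, hgdom, hgsum⟩ := exists_italian_of_w221 G H hH f hf
    calc gammaI (lexProd G H) ≤ ∑ p, (g p : ℕ) := Nat.sInf_le ⟨g, hgdom, rfl⟩
      _ = ∑ v, (f v : ℕ) := hgsum
      _ = gammaW G ![2,2,1] := hsum
  · obtain ⟨g, hgdom, hgsum⟩ := Nat.sInf_mem hne1
    obtain ⟨f, hf, hle⟩ := exists_w221_of_italian G H hG hH2 hH g hgdom
    calc gammaW G ![2,2,1] ≤ ∑ v, (f v : ℕ) := Nat.sInf_le ⟨f, hf, rfl⟩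
      _ ≤ ∑ p, (g p : ℕ) := hle
      _ = gammaI (lexProd G H) := hgsum
end

section
/- Let G be a graph with no isolated vertex and H a nontrivial graph with γ(H) ≥ 3 and (γ_I(H) ≠ 3 or γ(H) ≠ 3). Then γ_I(G∘H) = γ_{(2,2,2)}(G). -/
open scoped Classical
open Finset SimpleGraph

section Aux

lemma sum_image_le_nat {α β : Type*} [DecidableEq β] (s : Finset α) (f : α → β) (g : β → ℕ) :
    ∑ b ∈ s.image f, g b ≤ ∑ a ∈ s, g (f a) := by
  induction s using Finset.induction with
  | empty => simp
  | @insert a s h ih =>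
    rw [Finset.image_insert, Finset.sum_insert h]
    by_cases hb : f a ∈ s.image f
    · rw [Finset.insert_eq_self.mpr hb]; omega
    · rw [Finset.sum_insert hb]; omega

variable {V W : Type*} [Fintype V] [Fintype W]

lemma lex_sum (G : SimpleGraph V) (H : SimpleGraph W) (F : V × W → ℕ) (v : V) (w : W) :
    (∑ p : V × W, if (lexProd G H).Adj (v,w) p then F p else 0)
      = (∑ x, if G.Adj v x then (∑ y, F (x,y)) else 0)
        + (∑ y, if H.Adj w y then F (v,y) else 0) := by
  rw [Fintype.sum_prod_type]
  have h1 : ∀ x : V, (∑ y, if (lexProd G H).Adj (v,w) (x,y) then F (x,y) else 0)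
      = (if G.Adj v x then (∑ y, F (x,y)) else 0)
        + (if x = v then (∑ y, if H.Adj w y then F (v,y) else 0) else 0) := by
    intro x
    by_cases hx : G.Adj v x
    · have hxv : x ≠ v := fun h => G.irrefl (v := v) (h ▸ hx)
      simp only [hx, if_true, hxv, if_false, add_zero]
      exact Finset.sum_congr rfl fun y _ => by
        rw [if_pos (show (lexProd G H).Adj (v,w) (x,y) from Or.inl hx)]
    · by_cases hxv : x = v
      · rw [hxv, if_neg (G.irrefl (v := v)), if_pos rfl, zero_add]
        refine Finset.sum_congr rfl fun y _ => ?_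
        have hiff : (lexProd G H).Adj (v,w) (v,y) ↔ H.Adj w y := by
          constructor
          · rintro (h | ⟨_, h⟩)
            · exact absurd h (G.irrefl (v := v))
            · exact h
          · exact fun h => Or.inr ⟨rfl, h⟩
        by_cases hy : H.Adj w y
        · rw [if_pos (hiff.mpr hy), if_pos hy]
        · rw [if_neg (fun h => hy (hiff.mp h)), if_neg hy]
      · simp only [hx, if_false, hxv, add_zero]
        refine Finset.sum_eq_zero fun y _ => ?_
        rw [if_neg]
        rintro (h | ⟨h, _⟩)
        · exact hx h
        · exact hxv h.symm
  simp_rw [h1]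
  rw [Finset.sum_add_distrib]
  congr 1
  simp

lemma fin3_val_ne_zero {i : Fin 3} (h : i ≠ 0) : 1 ≤ (i : ℕ) := by
  by_contra hc
  exact h (Fin.ext (by omega))

lemma gamma_le_weight (H : SimpleGraph W) (f : W → Fin 3)
    (hf : ∀ w, f w = 0 → ∃ y, H.Adj w y ∧ f y ≠ 0) :
    gamma H ≤ ∑ w, (f w : ℕ) := by
  classical
  set S : Finset W := Finset.univ.filter (fun w => f w ≠ 0) with hS
  have hdom : ∀ v, v ∈ S ∨ ∃ u ∈ S, H.Adj u v := by
    intro v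
    by_cases hv : f v = 0
    · obtain ⟨y, hy, hy0⟩ := hf v hv
      exact Or.inr ⟨y, by simp [hS, hy0], hy.symm⟩
    · exact Or.inl (by simp [hS, hv])
  calc gamma H ≤ S.card := Nat.sInf_le ⟨S, hdom, rfl⟩
    _ ≤ ∑ w, (f w : ℕ) := by
        rw [Finset.card_eq_sum_ones]
        calc ∑ _w ∈ S, 1 ≤ ∑ w ∈ S, (f w : ℕ) :=
              Finset.sum_le_sum fun i hi =>
                fin3_val_ne_zero (Finset.mem_filter.mp hi).2
          _ ≤ ∑ w, (f w : ℕ) := Finset.sum_le_sum_of_subset (Finset.filter_subset _ _)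

lemma exists_adj_pos (H : SimpleGraph W) (c : W → Fin 3) (w : W)
    (h : 1 ≤ ∑ y, if H.Adj w y then (c y : ℕ) else 0) :
    ∃ y, H.Adj w y ∧ c y ≠ 0 := by
  by_contra hc
  push_neg at hc
  have : (∑ y, if H.Adj w y then (c y : ℕ) else 0) = 0 := by
    refine Finset.sum_eq_zero fun y _ => ?_
    by_cases hy : H.Adj w y
    · rw [if_pos hy, hc y hy]; rfl
    · rw [if_neg hy]
  omega

lemma gammaI_nonempty (H : SimpleGraph W) :
    {n | ∃ f : W → Fin 3, WDom H ![2,0,0] f ∧ ∑ v, (f v : ℕ) = n}.Nonempty := by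
  refine ⟨_, fun _ => (2 : Fin 3), fun v => ?_, rfl⟩
  have : (![2,0,0] : Fin 3 → ℕ) 2 = 0 := rfl
  rw [this]
  exact Nat.zero_le _

lemma four_le_gammaI (H : SimpleGraph W) (hH : 3 ≤ gamma H)
    (hHI : gammaI H ≠ 3 ∨ gamma H ≠ 3) : 4 ≤ gammaI H := by
  obtain ⟨f, hf, hsum⟩ := Nat.sInf_mem (gammaI_nonempty H)
  have hgle : gamma H ≤ gammaI H := by
    rw [gammaI, gammaW, ← hsum]
    refine gamma_le_weight H f fun w hw => ?_
    have h2 := hf w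
    rw [hw] at h2
    have h20 : (![2,0,0] : Fin 3 → ℕ) 0 = 2 := rfl
    rw [h20] at h2
    exact exists_adj_pos H f w (le_trans one_le_two h2)
  clear hsum hf
  rcases hHI with h | h
  · omega
  · omega

end Aux

lemma arith_min2_le_one {a : ℕ} (h : min 2 a ≤ 1) : a ≤ 1 := by omega
lemma arith_min2_eq {a : ℕ} (h : a ≤ 1) : a = min 2 a := by omega
lemma arith_sub1 {a : ℕ} (h : 1 ≤ a) : 2 - a ≤ 1 := by omega
lemma arith_two_le {a : ℕ} : 2 ≤ a + (2 - a) := by omega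
lemma arith_lin1 {a b c d e : ℕ} (h : a + c + b ≤ d + (e + c)) : a + b ≤ d + e := by omega

theorem italian_lex_of_gamma_ge_three {V W : Type*} [Fintype V] [Fintype W] [Nontrivial W]
    (G : SimpleGraph V) (H : SimpleGraph W)
    (hG : ∀ v, ∃ u, G.Adj v u) (hH : 3 ≤ gamma H)
    (hHI : gammaI H ≠ 3 ∨ gamma H ≠ 3) :
    gammaI (lexProd G H) = gammaW G ![2,2,2] := by
  classical
  have hI4 : 4 ≤ gammaI H := four_le_gammaI H hH hHI
  have h222 : ∀ i : Fin 3, (![2,2,2] : Fin 3 → ℕ) i = 2 := by decide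
  have h200 : ∀ i : Fin 3, i ≠ 0 → (![2,0,0] : Fin 3 → ℕ) i = 0 := by decide
  have h2000 : (![2,0,0] : Fin 3 → ℕ) 0 = 2 := rfl
  have hWne : {n | ∃ f : V → Fin 3, WDom G ![2,2,2] f ∧ ∑ v, (f v : ℕ) = n}.Nonempty := by
    refine ⟨_, fun _ => (2 : Fin 3), fun v => ?_, rfl⟩
    obtain ⟨x, hx⟩ := hG v
    rw [h222]
    calc (2:ℕ) = (if G.Adj v x then (((2:Fin 3)):ℕ) else 0) := by
          rw [if_pos hx]; rfl
      _ ≤ ∑ u, if G.Adj v u then (((2:Fin 3)):ℕ) else 0 :=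
          Finset.single_le_sum (f := fun u => if G.Adj v u then (((2:Fin 3)):ℕ) else 0)
            (fun i _ => Nat.zero_le _) (Finset.mem_univ x)
  apply le_antisymm
  · -- γ_I(G∘H) ≤ γ_W(G)
    obtain ⟨g, hg, hgsum⟩ := Nat.sInf_mem hWne
    obtain ⟨w₀⟩ := (inferInstance : Nonempty W)
    set f : V × W → Fin 3 := fun p => if p.2 = w₀ then g p.1 else 0 with hfdef
    have hcopy : ∀ x, (∑ y, ((f (x,y)) : ℕ)) = (g x : ℕ) := by
      intro x
      have hv : ∀ y, ((f (x,y)) : ℕ) = if y = w₀ then (g x : ℕ) else 0 := by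
        intro y; by_cases hy : y = w₀ <;> simp [hfdef, hy]
      simp_rw [hv]
      simp
    have hWD : WDom (lexProd G H) ![2,0,0] f := by
      rintro ⟨v, w⟩
      by_cases h0 : f (v, w) = 0
      · rw [h0, h2000]
        calc (2:ℕ) ≤ ∑ x, if G.Adj v x then (g x : ℕ) else 0 := by
              have hgv := hg v; rwa [h222] at hgv
          _ ≤ (∑ x, if G.Adj v x then (∑ y, ((f (x,y)):ℕ)) else 0)
              + (∑ y, if H.Adj w y then ((f (v,y)):ℕ) else 0) := by
              refine le_trans (le_of_eq ?_) (Nat.le_add_right _ _)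
              refine Finset.sum_congr rfl fun x _ => ?_
              rw [hcopy]
          _ = ∑ p : V × W, if (lexProd G H).Adj (v,w) p then ((f p):ℕ) else 0 :=
              (lex_sum G H (fun p => ((f p):ℕ)) v w).symm
      · rw [h200 _ h0]; exact Nat.zero_le _
    have hfw : (∑ p : V × W, ((f p):ℕ)) = ∑ v, ((g v):ℕ) := by
      rw [Fintype.sum_prod_type]
      exact Finset.sum_congr rfl fun x _ => hcopy x
    exact le_trans (Nat.sInf_le ⟨f, hWD, rfl⟩) (le_of_eq (hfw.trans hgsum))
  · -- γ_W(G) ≤ γ_I(G∘H)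
    have hIne : {n | ∃ f : V × W → Fin 3, WDom (lexProd G H) ![2,0,0] f ∧
        ∑ p, (f p : ℕ) = n}.Nonempty := by
      refine ⟨_, fun _ => (2 : Fin 3), fun p => ?_, rfl⟩
      have : (![2,0,0] : Fin 3 → ℕ) 2 = 0 := rfl
      rw [this]; exact Nat.zero_le _
    obtain ⟨f, hf, hfsum⟩ := Nat.sInf_mem hIne
    have hgoal : gammaI (lexProd G H) = ∑ p : V × W, ((f p):ℕ) := hfsum.symm
    rw [hgoal]
    set u : V → ℕ := fun x => ∑ y, ((f (x,y)):ℕ) with hu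
    have hIt : ∀ v w, f (v,w) = 0 →
        2 ≤ (∑ x, if G.Adj v x then u x else 0)
            + (∑ y, if H.Adj w y then ((f (v,y)):ℕ) else 0) := by
      intro v w h0
      have hfvw := hf (v,w)
      rw [h0, h2000, lex_sum G H (fun p => ((f p):ℕ)) v w] at hfvw
      exact hfvw
    set B : Finset V :=
      Finset.univ.filter (fun v => (∑ x, if G.Adj v x then min 2 (u x) else 0) ≤ 1) with hB
    have hlight : ∀ v ∈ B, ∀ x, G.Adj v x → u x ≤ 1 := by
      intro v hv x hx
      have hb : (∑ x, if G.Adj v x then min 2 (u x) else 0) ≤ 1 := (Finset.mem_filter.mp hv).2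
      have hle : min 2 (u x) ≤ ∑ x, if G.Adj v x then min 2 (u x) else 0 := by
        calc min 2 (u x) = if G.Adj v x then min 2 (u x) else 0 := (if_pos hx).symm
          _ ≤ _ := Finset.single_le_sum (f := fun x => if G.Adj v x then min 2 (u x) else 0)
              (fun i _ => Nat.zero_le _) (Finset.mem_univ x)
      exact arith_min2_le_one (le_trans hle hb)
    have hWv : ∀ v ∈ B, (∑ x, if G.Adj v x then u x else 0) ≤ 1 := by
      intro v hv
      have hb : (∑ x, if G.Adj v x then min 2 (u x) else 0) ≤ 1 := (Finset.mem_filter.mp hv).2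
      have heq : (∑ x, if G.Adj v x then u x else 0)
          = ∑ x, if G.Adj v x then min 2 (u x) else 0 := by
        refine Finset.sum_congr rfl fun x _ => ?_
        by_cases hx : G.Adj v x
        · rw [if_pos hx, if_pos hx]
          exact arith_min2_eq (hlight v hv x hx)
        · rw [if_neg hx, if_neg hx]
      rw [heq]; exact hb
    have hrex : ∀ v : V, ∃ t, G.Adj v t ∧ ((∃ s, G.Adj v s ∧ 1 ≤ u s) → 1 ≤ u t) := by
      intro v
      by_cases h : ∃ s, G.Adj v s ∧ 1 ≤ u s
      · obtain ⟨s, hs1, hs2⟩ := h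
        exact ⟨s, hs1, fun _ => hs2⟩
      · obtain ⟨t, ht⟩ := hG v
        exact ⟨t, ht, fun hc => absurd hc h⟩
    choose r hr1 hr2 using hrex
    set extra : V → ℕ := fun v => if (∃ s, G.Adj v s ∧ 1 ≤ u s) then 1 else 2 with hextra
    have hbad : ∀ v ∈ B, 2 + extra v ≤ u v := by
      intro v hv
      simp only [hextra]
      by_cases hex : ∃ s, G.Adj v s ∧ 1 ≤ u s
      · rw [if_pos hex]
        have hcond : ∀ w, f (v,w) = 0 → ∃ y, H.Adj w y ∧ f (v,y) ≠ 0 := by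
          intro w hw
          have h2 := hIt v w hw
          have h3 := hWv v hv
          have h4 : 1 ≤ ∑ y, if H.Adj w y then ((f (v,y)):ℕ) else 0 := by
            by_contra hc
            push_neg at hc
            have hc0 : (∑ y, if H.Adj w y then ((f (v,y)):ℕ) else 0) = 0 :=
              Nat.lt_one_iff.mp hc
            rw [hc0, add_zero] at h2
            exact absurd (le_trans h2 h3) (by decide)
          exact exists_adj_pos H (fun y => f (v,y)) w h4
        have hgw : gamma H ≤ u v := by
          calc gamma H ≤ ∑ y, ((f (v,y)):ℕ) := gamma_le_weight H (fun y => f (v,y)) hcond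
            _ = u v := rfl
        have h3 : 3 ≤ u v := le_trans hH hgw
        calc 2 + 1 = 3 := rfl
          _ ≤ u v := h3
      · rw [if_neg hex]
        have hW0 : (∑ x, if G.Adj v x then u x else 0) = 0 := by
          refine Finset.sum_eq_zero fun x _ => ?_
          by_cases hx : G.Adj v x
          · rw [if_pos hx]
            push_neg at hex
            exact Nat.lt_one_iff.mp (hex x hx)
          · rw [if_neg hx]
        have hItal : WDom H ![2,0,0] (fun y => f (v,y)) := by
          intro w
          show (![2,0,0] : Fin 3 → ℕ) (f (v,w)) ≤ ∑ y, if H.Adj w y then ((f (v,y)):ℕ) else 0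
          by_cases hw : f (v,w) = 0
          · rw [hw, h2000]
            have h2 := hIt v w hw
            rw [hW0, zero_add] at h2
            exact h2
          · rw [h200 _ hw]; exact Nat.zero_le _
        have hgi : gammaI H ≤ u v := Nat.sInf_le ⟨fun y => f (v,y), hItal, rfl⟩
        have h4 : 4 ≤ u v := le_trans hI4 hgi
        calc 2 + 2 = 4 := rfl
          _ ≤ u v := h4
    have hrbound : ∀ v ∈ B, 2 - u (r v) ≤ extra v := by
      intro v _
      simp only [hextra]
      by_cases hex : ∃ s, G.Adj v s ∧ 1 ≤ u s
      · rw [if_pos hex]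
        exact arith_sub1 (hr2 v hex)
      · rw [if_neg hex]
        exact Nat.sub_le _ _
    set T : Finset V := B.image r with hT
    have hTB : ∀ t ∈ T, t ∉ B := by
      intro t ht htB
      obtain ⟨v, hvB, hrv⟩ := Finset.mem_image.mp ht
      have h1 : u t ≤ 1 := hrv ▸ hlight v hvB (r v) (hr1 v)
      have h2 : 2 + extra t ≤ u t := hbad t htB
      have h3 : (2:ℕ) ≤ 1 := le_trans (le_trans (Nat.le_add_right 2 (extra t)) h2) h1
      exact absurd h3 (by decide)
    have hdisj : Disjoint B T := Finset.disjoint_right.mpr hTB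
    set gn : V → ℕ := fun v => if v ∈ B ∪ T then 2 else min 2 (u v) with hgn
    have hgn2 : ∀ v, gn v ≤ 2 := by
      intro v
      simp only [hgn]
      split
      · exact le_refl 2
      · exact min_le_left _ _
    set g : V → Fin 3 := fun v => ⟨gn v, Nat.lt_succ_of_le (hgn2 v)⟩ with hgdef
    have hgval : ∀ v, ((g v):ℕ) = gn v := fun v => rfl
    have hgge : ∀ x, min 2 (u x) ≤ ((g x):ℕ) := by
      intro x
      rw [hgval]
      simp only [hgn]
      split
      · exact min_le_left _ _
      · exact le_refl _
    have hWD : WDom G ![2,2,2] g := by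
      intro v
      rw [h222]
      by_cases hv : v ∈ B
      · have hrT : r v ∈ B ∪ T := Finset.mem_union_right _ (Finset.mem_image_of_mem r hv)
        have hgr : ((g (r v)):ℕ) = 2 := by
          rw [hgval]; simp only [hgn]; rw [if_pos hrT]
        calc (2:ℕ) = if G.Adj v (r v) then ((g (r v)):ℕ) else 0 := by
              rw [if_pos (hr1 v), hgr]
          _ ≤ ∑ x, if G.Adj v x then ((g x):ℕ) else 0 :=
              Finset.single_le_sum (f := fun x => if G.Adj v x then ((g x):ℕ) else 0)
                (fun i _ => Nat.zero_le _) (Finset.mem_univ (r v))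
      · have hnb : ¬ ((∑ x, if G.Adj v x then min 2 (u x) else 0) ≤ 1) := by
          intro hc
          exact hv (Finset.mem_filter.mpr ⟨Finset.mem_univ v, hc⟩)
        have h2 : 2 ≤ ∑ x, if G.Adj v x then min 2 (u x) else 0 := Nat.not_le.mp hnb
        calc (2:ℕ) ≤ ∑ x, if G.Adj v x then min 2 (u x) else 0 := h2
          _ ≤ ∑ x, if G.Adj v x then ((g x):ℕ) else 0 := by
              refine Finset.sum_le_sum fun x _ => ?_
              by_cases hx : G.Adj v x
              · rw [if_pos hx, if_pos hx]; exact hgge x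
              · rw [if_neg hx, if_neg hx]
    -- weight accounting
    have e1 : (∑ v ∈ B, gn v) + (∑ v ∈ B, extra v) ≤ ∑ v ∈ B, u v := by
      rw [← Finset.sum_add_distrib]
      refine Finset.sum_le_sum fun v hv => ?_
      have h := hbad v hv
      have hg2 : gn v = 2 := by
        simp only [hgn]; rw [if_pos (Finset.mem_union_left _ hv)]
      rw [hg2]; exact h
    have e2 : (∑ t ∈ T, gn t) ≤ (∑ t ∈ T, u t) + ∑ t ∈ T, (2 - u t) := by
      rw [← Finset.sum_add_distrib]
      refine Finset.sum_le_sum fun t ht => ?_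
      have hg2 : gn t = 2 := by
        simp only [hgn]; rw [if_pos (Finset.mem_union_right _ ht)]
      rw [hg2]; exact arith_two_le
    have e3 : (∑ t ∈ T, (2 - u t)) ≤ ∑ v ∈ B, extra v := by
      calc (∑ t ∈ T, (2 - u t)) ≤ ∑ v ∈ B, (2 - u (r v)) := by
            rw [hT]; exact sum_image_le_nat B r _
        _ ≤ ∑ v ∈ B, extra v := Finset.sum_le_sum hrbound
    have e4 : (∑ v ∈ B ∪ T, gn v) ≤ ∑ v ∈ B ∪ T, u v := by
      rw [Finset.sum_union hdisj, Finset.sum_union hdisj]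
      exact arith_lin1 (add_le_add e1 (e2.trans (Nat.add_le_add_left e3 _)))
    have e5 : (∑ v, gn v) ≤ ∑ v, u v := by
      rw [← Finset.sum_sdiff (Finset.subset_univ (B ∪ T)) (f := gn),
          ← Finset.sum_sdiff (Finset.subset_univ (B ∪ T)) (f := u)]
      refine Nat.add_le_add ?_ e4
      refine Finset.sum_le_sum fun v hv => ?_
      have hvC : v ∉ B ∪ T := (Finset.mem_sdiff.mp hv).2
      simp only [hgn]
      rw [if_neg hvC]
      exact min_le_right _ _
    calc gammaW G ![2,2,2] ≤ ∑ v, ((g v):ℕ) := Nat.sInf_le ⟨g, hWD, rfl⟩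
      _ = ∑ v, gn v := Finset.sum_congr rfl fun v _ => hgval v
      _ ≤ ∑ v, u v := e5
      _ = ∑ p : V × W, ((f p):ℕ) := by
          rw [Fintype.sum_prod_type]
end

section
/- Let G = G_1 ⊙ G_2 be a corona product where G_1 has no isolated vertices, and let w=(w_0,...,w_l) ∈ ℤ⁺ × ℕ^l. If l ≥ w_0 ≥ w_1 ≥ ... ≥ w_l and |V(G_2)| ≥ w_0, then γ_w(G) = w_0 · γ(G). -/
open scoped Classical
open Finset SimpleGraph

/-- The corona product `G1 ⊙ G2`. -/
def corona {A B : Type*} (G1 : SimpleGraph A) (G2 : SimpleGraph B) :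
    SimpleGraph (A ⊕ A × B) where
  Adj x y :=
    match x, y with
    | Sum.inl a, Sum.inl b => G1.Adj a b
    | Sum.inl a, Sum.inr p => a = p.1
    | Sum.inr p, Sum.inl b => p.1 = b
    | Sum.inr p, Sum.inr q => p.1 = q.1 ∧ G2.Adj p.2 q.2
  symm := by
    constructor
    rintro (a | ⟨a, u⟩) (b | ⟨b, v⟩) h
    · exact G1.adj_symm h
    · exact h.symm
    · exact h.symm
    · exact ⟨h.1.symm, G2.adj_symm h.2⟩
  loopless := by
    constructor
    rintro (a | ⟨a, u⟩) h
    · exact G1.irrefl h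
    · exact G2.irrefl h.2

theorem gammaW_corona {A B : Type*} [Fintype A] [Fintype B]
    (G1 : SimpleGraph A) (G2 : SimpleGraph B) {l : ℕ} (w : Fin (l+1) → ℕ)
    (h1 : ∀ v, ∃ u, G1.Adj v u) (hw : Antitone w) (h0 : 1 ≤ w 0)
    (hl : w 0 ≤ l) (hB : w 0 ≤ Fintype.card B) :
    gammaW (corona G1 G2) w = w 0 * gamma (corona G1 G2) := by
  classical
  obtain ⟨b₀⟩ : Nonempty B := Fintype.card_pos_iff.mp (lt_of_lt_of_le h0 hB)
  -- adjacency facts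
  have adjll : ∀ a u : A, (corona G1 G2).Adj (Sum.inl a) (Sum.inl u) ↔ G1.Adj a u := by
    intro a u; rfl
  have adjlr : ∀ (a : A) (p : A × B), (corona G1 G2).Adj (Sum.inl a) (Sum.inr p) ↔ a = p.1 := by
    intro a p; rfl
  have adjrl : ∀ (p : A × B) (a : A), (corona G1 G2).Adj (Sum.inr p) (Sum.inl a) ↔ p.1 = a := by
    intro p a; rfl
  have adjrr : ∀ (p q : A × B), (corona G1 G2).Adj (Sum.inr p) (Sum.inr q) ↔
      p.1 = q.1 ∧ G2.Adj p.2 q.2 := by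
    intro p q; rfl
  -- gamma = card A
  have hgamma : gamma (corona G1 G2) = Fintype.card A := by
    have hmem : Fintype.card A ∈ {n | ∃ S : Finset (A ⊕ A × B),
        (∀ v, v ∈ S ∨ ∃ u ∈ S, (corona G1 G2).Adj u v) ∧ S.card = n} := by
      refine ⟨Finset.univ.image Sum.inl, ?_, ?_⟩
      · rintro (a | p)
        · exact Or.inl (Finset.mem_image_of_mem _ (Finset.mem_univ a))
        · exact Or.inr ⟨Sum.inl p.1, Finset.mem_image_of_mem _ (Finset.mem_univ p.1),
            (adjlr p.1 p).mpr rfl⟩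
      · rw [Finset.card_image_of_injective _ Sum.inl_injective, Finset.card_univ]
    refine le_antisymm (Nat.sInf_le hmem) (le_csInf ⟨_, hmem⟩ ?_)
    rintro n ⟨S, hS, rfl⟩
    set cl : A ⊕ A × B → A := Sum.elim id Prod.fst with hcl
    have hsub : Finset.univ ⊆ S.image cl := by
      intro a _
      rcases hS (Sum.inr (a, b₀)) with h | ⟨u, hu, hadj⟩
      · exact Finset.mem_image.mpr ⟨_, h, rfl⟩
      · refine Finset.mem_image.mpr ⟨u, hu, ?_⟩
        rcases u with a' | p
        · exact (adjlr a' (a, b₀)).mp hadj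
        · exact ((adjrr p (a, b₀)).mp hadj).1
    calc Fintype.card A = Finset.univ.card := (Finset.card_univ).symm
      _ ≤ (S.image cl).card := Finset.card_le_card hsub
      _ ≤ S.card := Finset.card_image_le
  -- gammaW = w 0 * card A
  have hgw : gammaW (corona G1 G2) w = w 0 * Fintype.card A := by
    set F : A ⊕ A × B → Fin (l+1) :=
      Sum.elim (fun _ => (⟨w 0, Nat.lt_succ_of_le hl⟩ : Fin (l+1))) (fun _ => 0) with hF
    have hmem : w 0 * Fintype.card A ∈ {n | ∃ f : A ⊕ A × B → Fin (l+1),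
        WDom (corona G1 G2) w f ∧ ∑ v, (f v : ℕ) = n} := by
      refine ⟨F, ?_, ?_⟩
      · rintro (a | p)
        · obtain ⟨u, hu⟩ := h1 a
          have hterm : (if (corona G1 G2).Adj (Sum.inl a) (Sum.inl u) then
              (F (Sum.inl u) : ℕ) else 0) = w 0 := by
            rw [if_pos ((adjll a u).mpr hu)]; rfl
          calc w (F (Sum.inl a)) ≤ w 0 := hw (Fin.zero_le _)
            _ = _ := hterm.symm
            _ ≤ ∑ v, if (corona G1 G2).Adj (Sum.inl a) v then (F v : ℕ) else 0 :=
              Finset.single_le_sum (f := fun v => if (corona G1 G2).Adj (Sum.inl a) v then (F v : ℕ) else 0) (fun i _ => by positivity) (Finset.mem_univ (Sum.inl u))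
        · have hterm : (if (corona G1 G2).Adj (Sum.inr p) (Sum.inl p.1) then
              (F (Sum.inl p.1) : ℕ) else 0) = w 0 := by
            rw [if_pos ((adjrl p p.1).mpr rfl)]; rfl
          calc w (F (Sum.inr p)) ≤ w 0 := hw (Fin.zero_le _)
            _ = _ := hterm.symm
            _ ≤ ∑ v, if (corona G1 G2).Adj (Sum.inr p) v then (F v : ℕ) else 0 :=
              Finset.single_le_sum (f := fun v => if (corona G1 G2).Adj (Sum.inr p) v then (F v : ℕ) else 0) (fun i _ => by positivity) (Finset.mem_univ (Sum.inl p.1))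
      · rw [Fintype.sum_sum_type]
        simp [hF, mul_comm]
    refine le_antisymm (Nat.sInf_le hmem) (le_csInf ⟨_, hmem⟩ ?_)
    rintro n ⟨f, hf, rfl⟩
    have key : ∀ a : A, w 0 ≤ (f (Sum.inl a) : ℕ) + ∑ b, (f (Sum.inr (a, b)) : ℕ) := by
      intro a
      by_cases hz : ∃ b, f (Sum.inr (a, b)) = 0
      · obtain ⟨b, hb⟩ := hz
        have := hf (Sum.inr (a, b))
        rw [hb] at this
        refine le_trans this ?_
        have hbound : ∀ v : A ⊕ A × B,
            (if (corona G1 G2).Adj (Sum.inr (a, b)) v then (f v : ℕ) else 0) ≤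
            (if Sum.elim id Prod.fst v = a then (f v : ℕ) else 0) := by
          rintro (a' | p)
          · by_cases h : (corona G1 G2).Adj (Sum.inr (a, b)) (Sum.inl a')
            · rw [if_pos h, if_pos]
              exact ((adjrl (a, b) a').mp h).symm
            · simp [h]
          · by_cases h : (corona G1 G2).Adj (Sum.inr (a, b)) (Sum.inr p)
            · rw [if_pos h, if_pos]
              exact (((adjrr (a, b) p).mp h).1).symm
            · simp [h]
        calc (∑ v, if (corona G1 G2).Adj (Sum.inr (a, b)) v then (f v : ℕ) else 0)
            ≤ ∑ v, if Sum.elim id Prod.fst v = a then (f v : ℕ) else 0 :=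
              Finset.sum_le_sum (fun v _ => hbound v)
          _ = (f (Sum.inl a) : ℕ) + ∑ b', (f (Sum.inr (a, b')) : ℕ) := by
              rw [Fintype.sum_sum_type]
              congr 1
              · rw [Finset.sum_eq_single a]
                · exact if_pos rfl
                · intro x _ hx; exact if_neg hx
                · simp
              · rw [Fintype.sum_prod_type, Finset.sum_comm]
                refine Finset.sum_congr rfl (fun y _ => ?_)
                rw [Finset.sum_eq_single a]
                · exact if_pos rfl
                · intro x _ hx; exact if_neg hx
                · simp
      · push_neg at hz
        have : ∀ b : B, 1 ≤ (f (Sum.inr (a, b)) : ℕ) := by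
          intro b
          refine Nat.pos_of_ne_zero fun h => hz b ?_
          exact Fin.ext (by simpa using h)
        calc w 0 ≤ Fintype.card B := hB
          _ = ∑ _b : B, 1 := by simp
          _ ≤ ∑ b, (f (Sum.inr (a, b)) : ℕ) := Finset.sum_le_sum (fun b _ => this b)
          _ ≤ _ := Nat.le_add_left _ _
    calc w 0 * Fintype.card A = ∑ _a : A, w 0 := by simp [mul_comm]
      _ ≤ ∑ a, ((f (Sum.inl a) : ℕ) + ∑ b, (f (Sum.inr (a, b)) : ℕ)) :=
          Finset.sum_le_sum (fun a _ => key a)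
      _ = ∑ v, (f v : ℕ) := by
          rw [Finset.sum_add_distrib, Fintype.sum_sum_type, Fintype.sum_prod_type]
  rw [hgamma, hgw]
end

section
/- Let G be a graph of minimum degree δ ≥ 1 with w_0 ≤ l−1 and w_{l−1} ≥ 1, where w_0 ≥ ... ≥ w_{l−1}. Then γ_{(w_0,...,w_{l−2},1)}(G) ≤ γ_{(w_0,...,w_{l−1},0)}(G). -/
open scoped Classical
open Finset SimpleGraph

/-- helper: bound a neighbor-sum below by a single neighbor's value. -/
lemma nbr_sum_ge {V : Type*} [Fintype V] (G : SimpleGraph V) {v u : V} (h : G.Adj v u)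
    (F : V → ℕ) : F u ≤ ∑ x, if G.Adj v x then F x else 0 := by
  calc F u = (if G.Adj v u then F u else 0) := by rw [if_pos h]
    _ ≤ _ := Finset.single_le_sum (f := fun x => if G.Adj v x then F x else 0)
        (fun x _ => Nat.zero_le _) (Finset.mem_univ u)

/-- the modified function used in the proof. -/
noncomputable def gfun {V : Type*} {m : ℕ} (f : V → Fin (m+3)) (c : V → V) (v : V) :
    Fin (m+2) :=
  if f v = Fin.last (m+2) then Fin.last (m+1)
  else if f v = 0 ∧ ∃ x, f x = Fin.last (m+2) ∧ c x = v then 1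
  else ⟨min ((f v : ℕ)) (m+1), by omega⟩

lemma fv_lt {V : Type*} {m : ℕ} {f : V → Fin (m+3)} {v : V}
    (hv : f v ≠ Fin.last (m+2)) : (f v : ℕ) < m+2 := by
  have h1 := (f v).isLt
  have h2 : (f v : ℕ) ≠ m+2 := fun hcon => hv (Fin.ext (by simp [hcon]))
  omega

lemma gfun_val_last {V : Type*} {m : ℕ} {f : V → Fin (m+3)} {c : V → V} {v : V}
    (hv : f v = Fin.last (m+2)) : ((gfun f c v : Fin (m+2)) : ℕ) = m+1 := by
  rw [gfun, if_pos hv]; simp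

lemma gfun_val_raised {V : Type*} {m : ℕ} {f : V → Fin (m+3)} {c : V → V} {v : V}
    (hv : f v ≠ Fin.last (m+2))
    (h : f v = 0 ∧ ∃ x, f x = Fin.last (m+2) ∧ c x = v) :
    ((gfun f c v : Fin (m+2)) : ℕ) = 1 := by
  rw [gfun, if_neg hv, if_pos h]; simp [Fin.val_one]

lemma gfun_val_other {V : Type*} {m : ℕ} {f : V → Fin (m+3)} {c : V → V} {v : V}
    (hv : f v ≠ Fin.last (m+2))
    (h : ¬(f v = 0 ∧ ∃ x, f x = Fin.last (m+2) ∧ c x = v)) :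
    ((gfun f c v : Fin (m+2)) : ℕ) = (f v : ℕ) := by
  rw [gfun, if_neg hv, if_neg h]
  have := fv_lt hv
  simp [min_eq_left (by omega : (f v : ℕ) ≤ m+1)]

/-- `gfun` never decreases the value of a non-`last` vertex. -/
lemma gfun_ge {V : Type*} {m : ℕ} {f : V → Fin (m+3)} {c : V → V} {v : V}
    (hv : f v ≠ Fin.last (m+2)) :
    (f v : ℕ) ≤ ((gfun f c v : Fin (m+2)) : ℕ) := by
  by_cases h : f v = 0 ∧ ∃ x, f x = Fin.last (m+2) ∧ c x = v
  · rw [gfun_val_raised hv h, h.1]; simp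
  · rw [gfun_val_other hv h]

theorem gammaW_last_one_le_last_zero {V : Type*} [Fintype V] (G : SimpleGraph V)
    (hG : ∀ v, ∃ u, G.Adj v u) {m : ℕ} (w : Fin (m+3) → ℕ)
    (hw : Antitone w) (h0 : 1 ≤ w 0) (hlast : w (Fin.last (m+2)) = 0)
    (hpen : 1 ≤ w ⟨m+1, by omega⟩) (hw0 : w 0 ≤ m+1) :
    gammaW G (fun i : Fin (m+2) => if (i : ℕ) = m+1 then 1 else w (Fin.castSucc i)) ≤
      gammaW G w := by
  classical
  have hne : {n | ∃ f : V → Fin (m+3), WDom G w f ∧ ∑ v, (f v : ℕ) = n}.Nonempty := by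
    refine ⟨∑ v : V, ((Fin.last (m+2) : Fin (m+3)) : ℕ), fun _ => Fin.last (m+2), ?_, rfl⟩
    intro v
    simp [hlast]
  obtain ⟨f, hf, hsum⟩ := Nat.sInf_mem hne
  obtain ⟨c, hc⟩ := Classical.axiomOfChoice hG
  have hw'le : ∀ i : Fin (m+2), (if (i : ℕ) = m+1 then 1 else w (Fin.castSucc i)) ≤ m+1 := by
    intro i
    by_cases h : (i : ℕ) = m+1
    · rw [if_pos h]; exact Nat.succ_le_succ (Nat.zero_le m)
    · rw [if_neg h]; exact le_trans (hw (Fin.zero_le _)) hw0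
  -- positivity of values of a vertex
  have hpos : ∀ u : V, f u ≠ 0 ∨ (∃ x, f x = Fin.last (m+2) ∧ c x = u) →
      1 ≤ ((gfun f c u : Fin (m+2)) : ℕ) := by
    intro u hu
    by_cases hl : f u = Fin.last (m+2)
    · rw [gfun_val_last hl]; exact Nat.succ_le_succ (Nat.zero_le m)
    · rcases hu with h | h
      · calc 1 ≤ (f u : ℕ) :=
              Nat.pos_of_ne_zero (fun hz => h (Fin.ext (by simpa using hz)))
          _ ≤ _ := gfun_ge hl
      · by_cases hz : f u = 0
        · rw [gfun_val_raised hl ⟨hz, h⟩]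
        · calc 1 ≤ (f u : ℕ) :=
                Nat.pos_of_ne_zero (fun hn => hz (Fin.ext (by simpa using hn)))
            _ ≤ _ := gfun_ge hl
  -- domination condition
  have hdom : WDom G (fun i : Fin (m+2) => if (i : ℕ) = m+1 then 1 else w (Fin.castSucc i))
      (gfun f c) := by
    intro v
    show (if ((gfun f c v : Fin (m+2)) : ℕ) = m+1 then 1 else w (gfun f c v).castSucc)
      ≤ ∑ u, if G.Adj v u then ((gfun f c u : Fin (m+2)) : ℕ) else 0
    by_cases hv : f v = Fin.last (m+2)
    · -- need sum ≥ 1, since g v has value m+1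
      rw [if_pos (gfun_val_last (c := c) hv)]
      have h1 : 1 ≤ ((gfun f c (c v) : Fin (m+2)) : ℕ) := by
        apply hpos
        by_cases hz : f (c v) = 0
        · exact Or.inr ⟨v, hv, rfl⟩
        · exact Or.inl hz
      exact le_trans h1 (nbr_sum_ge G (hc v) (fun u => ((gfun f c u : Fin (m+2)) : ℕ)))
    · by_cases hr : f v = 0 ∧ ∃ x, f x = Fin.last (m+2) ∧ c x = v
      · obtain ⟨x, hx, hcx⟩ := hr.2
        have hadj : G.Adj v x := (hcx ▸ hc x).symm
        calc (if ((gfun f c v : Fin (m+2)) : ℕ) = m+1 then 1 else w (gfun f c v).castSucc)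
            ≤ m+1 := hw'le _
          _ = ((gfun f c x : Fin (m+2)) : ℕ) := (gfun_val_last hx).symm
          _ ≤ _ := nbr_sum_ge G hadj (fun u => ((gfun f c u : Fin (m+2)) : ℕ))
      · have hgv : ((gfun f c v : Fin (m+2)) : ℕ) = (f v : ℕ) := gfun_val_other hv hr
        by_cases hnb : ∃ u, G.Adj v u ∧ f u = Fin.last (m+2)
        · obtain ⟨u, hadj, hu⟩ := hnb
          calc (if ((gfun f c v : Fin (m+2)) : ℕ) = m+1 then 1 else w (gfun f c v).castSucc)
              ≤ m+1 := hw'le _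
            _ = ((gfun f c u : Fin (m+2)) : ℕ) := (gfun_val_last hu).symm
            _ ≤ _ := nbr_sum_ge G hadj (fun u => ((gfun f c u : Fin (m+2)) : ℕ))
        · push_neg at hnb
          have hsle : (∑ u, if G.Adj v u then (f u : ℕ) else 0)
              ≤ ∑ u, if G.Adj v u then ((gfun f c u : Fin (m+2)) : ℕ) else 0 := by
            apply Finset.sum_le_sum
            intro u _
            by_cases ha : G.Adj v u
            · rw [if_pos ha, if_pos ha]; exact gfun_ge (hnb u ha)
            · simp [ha]
          have hkey : (if ((gfun f c v : Fin (m+2)) : ℕ) = m+1 then 1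
              else w (gfun f c v).castSucc) ≤ w (f v) := by
            by_cases h : ((gfun f c v : Fin (m+2)) : ℕ) = m+1
            · have hfv : f v = ⟨m+1, Nat.add_lt_add_left (by decide) m⟩ :=
                Fin.ext (by rw [← hgv, h])
              rw [if_pos h, hfv]; exact hpen
            · rw [if_neg h]
              have : Fin.castSucc (gfun f c v) = f v := Fin.ext (by simpa using hgv)
              rw [this]
          exact le_trans hkey (le_trans (hf v) hsle)
  -- weight inequality
  have hwt : (∑ v, ((gfun f c v : Fin (m+2)) : ℕ)) ≤ ∑ v, (f v : ℕ) := by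
    have hA : (Finset.univ.filter fun v => f v ≠ Fin.last (m+2) ∧ f v = 0 ∧
          ∃ x, f x = Fin.last (m+2) ∧ c x = v).card
        ≤ (Finset.univ.filter fun v => f v = Fin.last (m+2)).card := by
      refine Finset.card_le_card_of_injOn
        (fun v => if h : ∃ x, f x = Fin.last (m+2) ∧ c x = v then h.choose else v) ?_ ?_
      · intro v hv
        simp only [Finset.mem_coe, Finset.mem_filter, Finset.mem_univ, true_and] at hv ⊢
        rw [dif_pos hv.2.2]
        exact hv.2.2.choose_spec.1
      · intro v1 h1 v2 h2 heq
        simp only [Finset.coe_filter, Set.mem_setOf_eq, Finset.mem_univ, true_and] at h1 h2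
        simp only [dif_pos h1.2.2, dif_pos h2.2.2] at heq
        have e1 := h1.2.2.choose_spec.2
        have e2 := h2.2.2.choose_spec.2
        rw [← e1, ← e2, heq]
    have hcard1 : (Finset.univ.filter fun v => f v = Fin.last (m+2)).card
        = ∑ v, (if f v = Fin.last (m+2) then 1 else 0) := by
      rw [Finset.card_filter]
    have hcard2 : (Finset.univ.filter fun v => f v ≠ Fin.last (m+2) ∧ f v = 0 ∧
          ∃ x, f x = Fin.last (m+2) ∧ c x = v).card
        = ∑ v, (if f v ≠ Fin.last (m+2) ∧ f v = 0 ∧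
            ∃ x, f x = Fin.last (m+2) ∧ c x = v then 1 else 0) := by
      rw [Finset.card_filter]
    have hptw : ∀ v, ((gfun f c v : Fin (m+2)) : ℕ) + (if f v = Fin.last (m+2) then 1 else 0)
        ≤ (f v : ℕ) + (if f v ≠ Fin.last (m+2) ∧ f v = 0 ∧
            ∃ x, f x = Fin.last (m+2) ∧ c x = v then 1 else 0) := by
      intro v
      by_cases hv : f v = Fin.last (m+2)
      · rw [gfun_val_last hv, if_pos hv, if_neg (by tauto), hv]
        simp
      · rw [if_neg hv]
        by_cases hr : f v = 0 ∧ ∃ x, f x = Fin.last (m+2) ∧ c x = v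
        · rw [gfun_val_raised hv hr, if_pos ⟨hv, hr⟩, hr.1]
          simp
        · rw [gfun_val_other hv hr, if_neg (fun hcon => hr ⟨hcon.2.1, hcon.2.2⟩)]
    have := Finset.sum_le_sum (fun v (_ : v ∈ Finset.univ) => hptw v)
    rw [Finset.sum_add_distrib, Finset.sum_add_distrib, ← hcard1, ← hcard2] at this
    exact Nat.le_of_add_le_add_right (le_trans this (Nat.add_le_add_left hA _))
  calc gammaW G (fun i : Fin (m+2) => if (i : ℕ) = m+1 then 1 else w (Fin.castSucc i)) ≤ ∑ v, ((gfun f c v : Fin (m+2)) : ℕ) := Nat.sInf_le ⟨gfun f c, hdom, rfl⟩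
    _ ≤ ∑ v, (f v : ℕ) := hwt
    _ = gammaW G w := hsum
end

section
/- For a graph G, γ_{(2,2,2)}(G) = 4 if and only if at least one of the following holds: (i) γ_{×2,t}(G)=4; (ii) γ_t(G)=2 and G has minimum degree 1; (iii) γ_t(G)=2 and γ_{×2,t}(G) ≥ 4. -/
open scoped Classical
open Finset SimpleGraph

set_option linter.unusedSectionVars false

section Aux
variable {V : Type*} [Fintype V] (G : SimpleGraph V)

lemma w222 (i : Fin 3) : (![2,2,2] : Fin 3 → ℕ) i = 2 := by fin_cases i <;> rfl

lemma fin3_zero (i : Fin 3) (h2 : i ≠ 2) (h1 : i ≠ 1) : i = 0 := by omega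

lemma fin3_val (i : Fin 3) (h2 : i ≠ 2) : (i : ℕ) = if i = 1 then 1 else 0 := by
  fin_cases i <;> simp_all

lemma nsum_add_le (f : V → Fin 3) (v : V) :
    (∑ u, if G.Adj v u then (f u : ℕ) else 0) + (f v : ℕ) ≤ ∑ u, (f u : ℕ) := by
  have h1 : (∑ u, if G.Adj v u then (f u : ℕ) else 0)
      ≤ ∑ u ∈ Finset.univ.erase v, (f u : ℕ) := by
    rw [← Finset.sum_filter]
    refine Finset.sum_le_sum_of_subset ?_
    intro u hu
    simp only [Finset.mem_filter, Finset.mem_univ, true_and] at hu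
    exact Finset.mem_erase.mpr ⟨hu.ne', Finset.mem_univ u⟩
  calc (∑ u, if G.Adj v u then (f u : ℕ) else 0) + (f v : ℕ)
      ≤ (∑ u ∈ Finset.univ.erase v, (f u : ℕ)) + (f v : ℕ) := by omega
    _ = ∑ u, (f u : ℕ) := by
        rw [add_comm]
        exact Finset.add_sum_erase _ (fun u => (f u : ℕ)) (Finset.mem_univ v)

lemma dt_card (hV : Nonempty V) (S : Finset V)
    (hS : ∀ v, 2 ≤ (S.filter (fun u => G.Adj u v)).card) : 3 ≤ S.card := by
  obtain ⟨v0⟩ := hV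
  have h2 : 2 ≤ S.card := le_trans (hS v0) (Finset.card_filter_le _ _)
  rcases eq_or_lt_of_le h2 with h | h
  · exfalso
    obtain ⟨a, b, hab, rfl⟩ := Finset.card_eq_two.mp h.symm
    have hsub : ({a,b} : Finset V).filter (fun u => G.Adj u a) ⊆ {b} := by
      intro u hu
      simp only [Finset.mem_filter, Finset.mem_insert, Finset.mem_singleton] at hu ⊢
      rcases hu.1 with rfl | rfl
      · exact absurd hu.2 G.irrefl
      · rfl
    have := le_trans (hS a) (Finset.card_le_card hsub)
    simp at this
  · exact h

lemma indicator_wdom (S : Finset V)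
    (hS : ∀ v, 2 ≤ (S.filter (fun u => G.Adj u v)).card) :
    WDom G ![2,2,2] (fun v => if v ∈ S then 1 else 0) ∧
      ∑ v, ((if v ∈ S then 1 else 0 : Fin 3) : ℕ) = S.card := by
  constructor
  · intro v
    rw [w222]
    beta_reduce
    show 2 ≤ ∑ u, if G.Adj v u then ((if u ∈ S then 1 else 0 : Fin 3) : ℕ) else 0
    have key : ∀ u : V, (if G.Adj v u then ((if u ∈ S then 1 else 0 : Fin 3) : ℕ) else 0)
        = if u ∈ S ∧ G.Adj u v then 1 else 0 := by
      intro u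
      by_cases h1 : G.Adj v u <;> by_cases h2 : u ∈ S <;>
        simp [h1, h2, G.adj_comm]
    rw [Finset.sum_congr rfl (fun u _ => key u), ← Finset.card_filter]
    have : Finset.univ.filter (fun u => u ∈ S ∧ G.Adj u v) = S.filter (fun u => G.Adj u v) := by
      ext u; simp
    rw [this]
    exact hS v
  · beta_reduce
    show ∑ v, ((if v ∈ S then 1 else 0 : Fin 3) : ℕ) = S.card
    have : ∀ v : V, ((if v ∈ S then 1 else 0 : Fin 3) : ℕ) = if v ∈ S then 1 else 0 := by
      intro v; split_ifs <;> rfl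
    rw [Finset.sum_congr rfl (fun v _ => this v), Finset.sum_ite_mem, Finset.univ_inter,
      Finset.sum_const, smul_eq_mul, mul_one]

lemma double_wdom (S : Finset V) (hS : ∀ v, ∃ u ∈ S, G.Adj u v) (hc : S.card = 2) :
    WDom G ![2,2,2] (fun v => if v ∈ S then 2 else 0) ∧
      ∑ v, ((if v ∈ S then 2 else 0 : Fin 3) : ℕ) = 4 := by
  constructor
  · intro v
    rw [w222]
    beta_reduce
    show 2 ≤ ∑ u, if G.Adj v u then ((if u ∈ S then 2 else 0 : Fin 3) : ℕ) else 0
    obtain ⟨u, hu, hadj⟩ := hS v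
    have hterm : (if G.Adj v u then ((if u ∈ S then 2 else 0 : Fin 3) : ℕ) else 0) = 2 := by
      simp [hadj.symm, hu]
    calc (2:ℕ) = (if G.Adj v u then ((if u ∈ S then 2 else 0 : Fin 3) : ℕ) else 0) := hterm.symm
      _ ≤ _ := Finset.single_le_sum
          (f := fun u : V => if G.Adj v u then ((if u ∈ S then 2 else 0 : Fin 3) : ℕ) else 0)
          (fun i _ => Nat.zero_le _) (Finset.mem_univ u)
  · beta_reduce
    show ∑ v, ((if v ∈ S then 2 else 0 : Fin 3) : ℕ) = 4
    have : ∀ v : V, ((if v ∈ S then 2 else 0 : Fin 3) : ℕ) = if v ∈ S then 2 else 0 := by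
      intro v; split_ifs <;> rfl
    rw [Finset.sum_congr rfl (fun v _ => this v), Finset.sum_ite_mem, Finset.univ_inter,
      Finset.sum_const, smul_eq_mul, hc]

lemma weight_decomp (f : V → Fin 3) :
    ∑ v, (f v : ℕ) =
      2 * (Finset.univ.filter (fun v => f v = 2)).card +
        (Finset.univ.filter (fun v => f v = 1)).card := by
  rw [Finset.card_filter, Finset.card_filter, Finset.mul_sum, ← Finset.sum_add_distrib]
  refine Finset.sum_congr rfl fun v _ => ?_
  have : ∀ i : Fin 3, (i:ℕ) = 2 * (if i = 2 then 1 else 0) + (if i = 1 then 1 else 0) := by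
    decide
  exact this (f v)

lemma indicator_case (f : V → Fin 3) (hf : WDom G ![2,2,2] f) (h2 : ∀ v, f v ≠ 2) :
    (∀ v, 2 ≤ (((Finset.univ.filter (fun v => f v = 1))).filter (fun u => G.Adj u v)).card) ∧
    (Finset.univ.filter (fun v => f v = 1)).card = ∑ v, (f v : ℕ) := by
  constructor
  · intro v
    have hfv := hf v
    rw [w222] at hfv
    have key : ∀ u : V, (if G.Adj v u then (f u : ℕ) else 0)
        = if f u = 1 ∧ G.Adj u v then 1 else 0 := by
      intro u
      rw [fin3_val (f u) (h2 u)]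
      by_cases ha : G.Adj v u <;> by_cases hb : f u = 1 <;>
        simp [ha, hb, G.adj_comm]
    rw [Finset.sum_congr rfl (fun u _ => key u), ← Finset.card_filter] at hfv
    have : Finset.univ.filter (fun u => f u = 1 ∧ G.Adj u v)
        = (Finset.univ.filter (fun v => f v = 1)).filter (fun u => G.Adj u v) := by
      ext u; simp [and_comm]
    rwa [this] at hfv
  · rw [weight_decomp f]
    have : Finset.univ.filter (fun v => f v = 2) = ∅ := by
      ext v; simp [h2 v]
    rw [this]
    simp

end Aux

section Aux2
variable {V : Type*} [Fintype V] (G : SimpleGraph V)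

lemma four_cases (f : V → Fin 3) (hf : WDom G ![2,2,2] f) (hw : ∑ v, (f v : ℕ) = 4) :
    (∃ S : Finset V, (∀ v, 2 ≤ (S.filter (fun u => G.Adj u v)).card) ∧ S.card = 4) ∨
    (∃ S : Finset V, (∀ v, ∃ u ∈ S, G.Adj u v) ∧ S.card = 2) := by
  by_cases h2 : ∀ v, f v ≠ 2
  · obtain ⟨hdt, hcard⟩ := indicator_case G f hf h2
    exact Or.inl ⟨_, hdt, by omega⟩
  · push_neg at h2
    obtain ⟨u, hu⟩ := h2
    right
    by_cases h2' : ∃ x, x ≠ u ∧ f x = 2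
    · obtain ⟨v, hvu, hv⟩ := h2'
      have huv : u ≠ v := Ne.symm hvu
      have hpair : ∑ x ∈ ({u,v} : Finset V), (f x : ℕ) = 4 := by
        rw [Finset.sum_pair huv, hu, hv]
        decide
      have hsplit := Finset.sum_sdiff (f := fun x => (f x : ℕ)) (Finset.subset_univ ({u,v} : Finset V))
      beta_reduce at hsplit
      have hz : ∀ x, x ∉ ({u,v} : Finset V) → (f x : ℕ) = 0 := by
        intro x hx
        have h0 : ∑ x ∈ Finset.univ \ ({u,v} : Finset V), (f x : ℕ) = 0 := by omega
        exact Finset.sum_eq_zero_iff.mp h0 x (by simp [hx])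
      refine ⟨{u,v}, ?_, Finset.card_pair huv⟩
      intro x
      have hfx := hf x; rw [w222] at hfx
      have hsum : ∑ y, (if G.Adj x y then (f y : ℕ) else 0)
          = ∑ y ∈ ({u,v} : Finset V), (if G.Adj x y then (f y : ℕ) else 0) := by
        refine (Finset.sum_subset (Finset.subset_univ _) ?_).symm
        intro y _ hy
        rw [hz y hy]
        simp
      rw [hsum, Finset.sum_pair huv, hu, hv] at hfx
      by_cases hxu : G.Adj x u
      · exact ⟨u, by simp, hxu.symm⟩
      by_cases hxv : G.Adj x v
      · exact ⟨v, by simp, hxv.symm⟩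
      rw [if_neg hxu, if_neg hxv] at hfx
      omega
    · push_neg at h2'
      have hS2 : Finset.univ.filter (fun x => f x = 2) = {u} := by
        ext x
        simp only [Finset.mem_filter, Finset.mem_univ, true_and, Finset.mem_singleton]
        constructor
        · intro hx; by_contra hxu; exact h2' x hxu hx
        · rintro rfl; exact hu
      have hdec := weight_decomp f
      rw [hS2, hw, Finset.card_singleton] at hdec
      have hdec2 : (Finset.univ.filter (fun x => f x = 1)).card = 2 := by omega
      obtain ⟨v, w, hvw, hS1⟩ := Finset.card_eq_two.mp hdec2
      have hv1 : f v = 1 := by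
        have : v ∈ Finset.univ.filter (fun x => f x = 1) := by rw [hS1]; simp
        simpa using this
      have hw1 : f w = 1 := by
        have : w ∈ Finset.univ.filter (fun x => f x = 1) := by rw [hS1]; simp
        simpa using this
      have huv : u ≠ v := fun h => by rw [← h, hu] at hv1; exact absurd hv1 (by decide)
      have huw : u ≠ w := fun h => by rw [← h, hu] at hw1; exact absurd hw1 (by decide)
      have hz : ∀ x, x ∉ ({u,v,w} : Finset V) → (f x : ℕ) = 0 := by
        intro x hx
        simp only [Finset.mem_insert, Finset.mem_singleton, not_or] at hx
        have hx2 : f x ≠ 2 := h2' x hx.1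
        have hx1 : f x ≠ 1 := by
          intro hfx1
          have : x ∈ Finset.univ.filter (fun x => f x = 1) := by simp [hfx1]
          rw [hS1] at this
          simp only [Finset.mem_insert, Finset.mem_singleton] at this
          tauto
        rw [fin3_zero (f x) hx2 hx1]
        rfl
      have hsum : ∀ x, (∑ y, if G.Adj x y then (f y : ℕ) else 0) =
          (if G.Adj x u then 2 else 0) +
            ((if G.Adj x v then 1 else 0) + (if G.Adj x w then 1 else 0)) := by
        intro x
        have e1 : (∑ y, if G.Adj x y then (f y : ℕ) else 0)
            = ∑ y ∈ ({u,v,w} : Finset V), (if G.Adj x y then (f y : ℕ) else 0) := by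
          refine (Finset.sum_subset (Finset.subset_univ _) ?_).symm
          intro y _ hy
          rw [hz y hy]
          simp
        rw [e1, Finset.sum_insert (by simp [huv, huw]), Finset.sum_pair hvw, hu, hv1, hw1]
        simp only [show ((2:Fin 3):ℕ) = 2 from rfl, show ((1:Fin 3):ℕ) = 1 from rfl]
      refine ⟨{u,v}, ?_, Finset.card_pair huv⟩
      intro x
      have hfx := hf x
      rw [w222, hsum x] at hfx
      by_cases hxu : G.Adj x u
      · exact ⟨u, by simp, hxu.symm⟩
      by_cases hxv : G.Adj x v
      · exact ⟨v, by simp, hxv.symm⟩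
      rw [if_neg hxu, if_neg hxv] at hfx
      split_ifs at hfx <;> omega

lemma lb (hV : Nonempty V) (f : V → Fin 3) (hf : WDom G ![2,2,2] f) :
    3 ≤ ∑ v, (f v : ℕ) ∧ (∑ v, (f v : ℕ) = 3 →
      ∃ S : Finset V, (∀ v, 2 ≤ (S.filter (fun u => G.Adj u v)).card) ∧ S.card = 3) := by
  by_cases h2 : ∀ v, f v ≠ 2
  · obtain ⟨hdt, hcard⟩ := indicator_case G f hf h2
    have h3 := dt_card G hV _ hdt
    exact ⟨by omega, fun hs => ⟨_, hdt, by omega⟩⟩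
  · push_neg at h2
    obtain ⟨u, hu⟩ := h2
    have h1 := nsum_add_le G f u
    have hfu := hf u
    rw [w222] at hfu
    rw [hu, show ((2:Fin 3):ℕ) = 2 from rfl] at h1
    exact ⟨by omega, fun hs => by omega⟩

def WSet : Set ℕ := {n | ∃ f : V → Fin 3, WDom G ![2,2,2] f ∧ ∑ v, (f v : ℕ) = n}

def TSet : Set ℕ := {n | ∃ S : Finset V, (∀ v, ∃ u ∈ S, G.Adj u v) ∧ S.card = n}

def XSet : Set ℕ := {n | ∃ S : Finset V, (∀ v, 2 ≤ (S.filter (fun u => G.Adj u v)).card) ∧ S.card = n}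

lemma gammaW_eq : gammaW G ![2,2,2] = sInf (WSet G) := rfl

lemma gammaT_eq : gammaT G = sInf (TSet G) := rfl

lemma gammaX2T_eq : gammaX2T G = sInf (XSet G) := rfl

lemma mem_of_sInf_eq {S : Set ℕ} {n : ℕ} (h : sInf S = n) (hn : n ≠ 0) : n ∈ S := by
  have hne : S.Nonempty := by
    by_contra hc
    rw [Set.not_nonempty_iff_eq_empty] at hc
    rw [hc, Nat.sInf_empty] at h
    omega
  exact h ▸ Nat.sInf_mem hne

lemma sInf_eq_of {S : Set ℕ} {n : ℕ} (h1 : n ∈ S) (h2 : ∀ m ∈ S, n ≤ m) : sInf S = n :=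
  le_antisymm (Nat.sInf_le h1) (le_csInf ⟨n, h1⟩ h2)

lemma gammaT_two_of (h : ∃ S : Finset V, (∀ v, ∃ u ∈ S, G.Adj u v) ∧ S.card = 2) :
    sInf (TSet G) = 2 := by
  obtain ⟨S, hS, hc⟩ := h
  have hpos : 0 < S.card := by omega
  have hne : Nonempty V := by
    obtain ⟨x, -⟩ := Finset.card_pos.mp hpos
    exact ⟨x⟩
  have hmem : (2:ℕ) ∈ TSet G := ⟨S, hS, hc⟩
  apply sInf_eq_of hmem
  rintro m ⟨T, hT, rfl⟩
  obtain ⟨v0⟩ := hne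
  obtain ⟨a, ha, _⟩ := hT v0
  have h1 : 1 ≤ T.card := Finset.card_pos.mpr ⟨a, ha⟩
  rcases eq_or_lt_of_le h1 with h | h
  · exfalso
    obtain ⟨b, rfl⟩ := Finset.card_eq_one.mp h.symm
    obtain ⟨c, hcb, hadj⟩ := hT b
    rw [Finset.mem_singleton] at hcb
    subst hcb
    exact G.irrefl hadj
  · omega

lemma degree_eq (v : V) : (Finset.univ.filter (fun u => G.Adj u v)).card = G.degree v := by
  rw [← SimpleGraph.card_neighborFinset_eq_degree]
  congr 1
  ext u
  simp [SimpleGraph.mem_neighborFinset, G.adj_comm]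

end Aux2

theorem gammaW222_eq_four_iff {V : Type*} [Fintype V] (G : SimpleGraph V) :
    gammaW G ![2,2,2] = 4 ↔
      (gammaX2T G = 4 ∨ (gammaT G = 2 ∧ G.minDegree = 1) ∨
        (gammaT G = 2 ∧ 4 ≤ gammaX2T G)) := by
  classical
  rw [gammaW_eq, gammaT_eq, gammaX2T_eq]
  constructor
  · intro h
    have h4 : (4:ℕ) ∈ WSet G := mem_of_sInf_eq h (by omega)
    obtain ⟨f, hf, hw⟩ := h4
    have hne : Nonempty V := by
      by_contra hc
      rw [not_nonempty_iff] at hc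
      rw [Finset.univ_eq_empty, Finset.sum_empty] at hw
      omega
    have hno3 : ¬ ∃ S : Finset V, (∀ v, 2 ≤ (S.filter (fun u => G.Adj u v)).card) ∧ S.card = 3 := by
      rintro ⟨S, hS, hc3⟩
      obtain ⟨hwd, hwt⟩ := indicator_wdom G S hS
      have h3 : (3:ℕ) ∈ WSet G := ⟨_, hwd, by rw [hwt, hc3]⟩
      have := Nat.sInf_le h3
      omega
    rcases four_cases G f hf hw with ⟨S, hS, hc⟩ | htd2
    · left
      have hmem : (4:ℕ) ∈ XSet G := ⟨S, hS, hc⟩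
      apply sInf_eq_of hmem
      rintro m ⟨T, hT, rfl⟩
      have h3 := dt_card G hne T hT
      have hne3 : T.card ≠ 3 := fun hcc => hno3 ⟨T, hT, hcc⟩
      omega
    · have hT2 : sInf (TSet G) = 2 := gammaT_two_of G htd2
      by_cases hX : (XSet G).Nonempty
      · right; right
        refine ⟨hT2, ?_⟩
        obtain ⟨T, hT, hTc⟩ := Nat.sInf_mem hX
        have h3 := dt_card G hne T hT
        have hne3 : T.card ≠ 3 := fun hcc => hno3 ⟨T, hT, hcc⟩
        omega
      · right; left
        refine ⟨hT2, ?_⟩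
        have hδ1 : ∃ v, G.degree v ≤ 1 := by
          by_contra hcc
          push_neg at hcc
          refine hX ⟨Fintype.card V, Finset.univ, fun v => ?_, rfl⟩
          rw [degree_eq]
          exact hcc v
        obtain ⟨v, hv⟩ := hδ1
        have hmin_le : G.minDegree ≤ 1 := le_trans (G.minDegree_le_degree v) hv
        have hge : 1 ≤ G.minDegree := by
          haveI := hne
          apply SimpleGraph.le_minDegree_of_forall_le_degree
          intro x
          obtain ⟨S, hS, _⟩ := htd2
          obtain ⟨u, _, hadj⟩ := hS x
          rw [← degree_eq]
          exact Finset.card_pos.mpr ⟨u, by simp [hadj]⟩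
        omega
  · intro h
    have key : ((4:ℕ) ∈ WSet G) ∧
        (¬∃ S : Finset V, (∀ v, 2 ≤ (S.filter (fun u => G.Adj u v)).card) ∧ S.card = 3) ∧
        Nonempty V := by
      rcases h with hX4 | ⟨hT2, hδ⟩ | ⟨hT2, hX4'⟩
      · obtain ⟨S, hS, hc⟩ := mem_of_sInf_eq hX4 (by omega)
        obtain ⟨hwd, hwt⟩ := indicator_wdom G S hS
        have hpos : 0 < S.card := by omega
        have hne : Nonempty V := by
          obtain ⟨x, -⟩ := Finset.card_pos.mp hpos
          exact ⟨x⟩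
        refine ⟨⟨_, hwd, by rw [hwt, hc]⟩, ?_, hne⟩
        rintro ⟨T, hT, hc3⟩
        have h3 : (3:ℕ) ∈ XSet G := ⟨T, hT, hc3⟩
        have := Nat.sInf_le h3
        omega
      · obtain ⟨S, hS, hc⟩ := mem_of_sInf_eq hT2 (by omega)
        obtain ⟨hwd, hwt⟩ := double_wdom G S hS hc
        have hpos : 0 < S.card := by omega
        have hne : Nonempty V := by
          obtain ⟨x, -⟩ := Finset.card_pos.mp hpos
          exact ⟨x⟩
        haveI := hne
        refine ⟨⟨_, hwd, hwt⟩, ?_, hne⟩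
        rintro ⟨T, hT, hc3⟩
        obtain ⟨v, hv⟩ := G.exists_minimal_degree_vertex
        have h2 := hT v
        have hle : (T.filter (fun u => G.Adj u v)).card ≤ G.degree v := by
          rw [← degree_eq]
          exact Finset.card_le_card (Finset.filter_subset_filter _ (Finset.subset_univ T))
        omega
      · obtain ⟨S, hS, hc⟩ := mem_of_sInf_eq hT2 (by omega)
        obtain ⟨hwd, hwt⟩ := double_wdom G S hS hc
        have hpos : 0 < S.card := by omega
        have hne : Nonempty V := by
          obtain ⟨x, -⟩ := Finset.card_pos.mp hpos
          exact ⟨x⟩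
        refine ⟨⟨_, hwd, hwt⟩, ?_, hne⟩
        rintro ⟨T, hT, hc3⟩
        have h3 : (3:ℕ) ∈ XSet G := ⟨T, hT, hc3⟩
        have := Nat.sInf_le h3
        omega
    obtain ⟨h4, hno3, hne⟩ := key
    apply sInf_eq_of h4
    rintro m ⟨f, hf, rfl⟩
    obtain ⟨hlb, h3case⟩ := lb G hne f hf
    by_contra hcc
    push_neg at hcc
    have h3 : ∑ v, (f v : ℕ) = 3 := by omega
    exact hno3 (h3case h3)
end

section
/- For every integer n ≥ 3, the (2,2,2)-domination number of the path P_n equals 2γ_t(P_n); explicitly it equals n if n ≡ 0 (mod 4), n+1 if n ≡ 1,3 (mod 4), and n+2 if n ≡ 2 (mod 4). -/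
open scoped Classical
open Finset SimpleGraph

lemma seq_lb : ∀ (p : ℕ) (a : ℕ → ℕ), (∀ k, k+1 < p → 2 ≤ a k + a (k+1)) →
    2*(p/2) ≤ ∑ k ∈ range p, a k := by
  intro p
  induction p using Nat.strong_induction_on with
  | _ p ih =>
    match p with
    | 0 => intro a _; simp
    | 1 => intro a _; simp
    | (m+2) =>
      intro a h
      have h1 := ih m (by omega) a (fun k hk => h k (by omega))
      have h2 := h m (by omega)
      rw [Finset.sum_range_succ, Finset.sum_range_succ]
      omega

lemma seq_lb_right (p : ℕ) (a : ℕ → ℕ) (hp : 1 ≤ p)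
    (h : ∀ k, k+1 < p → 2 ≤ a k + a (k+1)) (hlast : 2 ≤ a (p-1)) :
    2*((p+1)/2) ≤ ∑ k ∈ range p, a k := by
  obtain ⟨m, rfl⟩ : ∃ m, p = m + 1 := ⟨p - 1, by omega⟩
  rw [Finset.sum_range_succ]
  have h1 := seq_lb m a (fun k hk => h k (by omega))
  simp only [Nat.add_sub_cancel] at hlast
  omega

lemma seq_lb_left (p : ℕ) (a : ℕ → ℕ) (hp : 1 ≤ p)
    (h : ∀ k, k+1 < p → 2 ≤ a k + a (k+1)) (hfirst : 2 ≤ a 0) :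
    2*((p+1)/2) ≤ ∑ k ∈ range p, a k := by
  obtain ⟨m, rfl⟩ : ∃ m, p = m + 1 := ⟨p - 1, by omega⟩
  rw [Finset.sum_range_succ']
  have h1 : 2*(m/2) ≤ ∑ k ∈ range m, a (k+1) := by
    simpa using seq_lb m (fun k => a (k+1)) (fun k hk => h (k+1) (by omega))
  omega

lemma seq_lb_both (p : ℕ) (a : ℕ → ℕ) (hp : 1 ≤ p)
    (h : ∀ k, k+1 < p → 2 ≤ a k + a (k+1)) (hfirst : 2 ≤ a 0) (hlast : 2 ≤ a (p-1)) :
    p + 2 - p % 2 ≤ ∑ k ∈ range p, a k := by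
  match p with
  | 1 => rw [Finset.sum_range_one]; omega
  | (m+2) =>
    rw [Finset.sum_range_succ, Finset.sum_range_succ']
    have h1 : 2*(m/2) ≤ ∑ k ∈ range m, a (k+1) := by
      simpa using seq_lb m (fun k => a (k+1)) (fun k hk => h (k+1) (by omega))
    simp only [show m+2-1 = m+1 from rfl] at hlast
    omega

lemma sum_range_even_odd (F : ℕ → ℕ) (n : ℕ) :
    ∑ i ∈ range n, F i = (∑ k ∈ range ((n+1)/2), F (2*k)) + ∑ k ∈ range (n/2), F (2*k+1) := by
  induction n with
  | zero => simp
  | succ n ih =>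
    rw [Finset.sum_range_succ, ih]
    rcases Nat.even_or_odd n with ⟨t, rfl⟩ | ⟨t, rfl⟩
    · have e1 : (t+t+1+1)/2 = t+1 := by omega
      have e2 : (t+t+1)/2 = t := by omega
      have e3 : (t+t)/2 = t := by omega
      rw [e1, e2, e3, Finset.sum_range_succ]
      have e4 : 2*t = t+t := by omega
      rw [e4]
      omega
    · have e1 : (2*t+1+1+1)/2 = t+1 := by omega
      have e2 : (2*t+1+1)/2 = t+1 := by omega
      have e3 : (2*t+1)/2 = t := by omega
      rw [e1, e2, e3]
      rw [Finset.sum_range_succ (fun k => F (2*k+1)) t]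
      omega

lemma sum_indicator_val {n : ℕ} (f : Fin n → Fin 3) (m : ℕ) :
    ∑ u : Fin n, (if u.val = m then (f u : ℕ) else 0) =
      if h : m < n then (f ⟨m, h⟩ : ℕ) else 0 := by
  split
  · next h =>
    rw [Finset.sum_eq_single (⟨m, h⟩ : Fin n)]
    · simp
    · intro b _ hb
      rw [if_neg]
      intro hb'
      exact hb (Fin.ext hb')
    · simp
  · next h =>
    apply Finset.sum_eq_zero
    intro u _
    rw [if_neg]
    intro e
    exact h (e ▸ u.isLt)

lemma key {n : ℕ} (f : Fin n → Fin 3) (hf : WDom (SimpleGraph.pathGraph n) ![2,2,2] f)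
    (F : ℕ → ℕ) (hF : ∀ (i : ℕ) (h : i < n), F i = (f ⟨i, h⟩ : ℕ))
    (hF0 : ∀ i, ¬ i < n → F i = 0) :
    ∀ i, i < n → 2 ≤ (if 1 ≤ i then F (i-1) else 0) + F (i+1) := by
  have hFD : ∀ m, (if h : m < n then (f ⟨m, h⟩ : ℕ) else 0) = F m := by
    intro m
    split
    · next h => exact (hF m h).symm
    · next h => exact (hF0 m h).symm
  intro i hi
  have h2 := hf ⟨i, hi⟩
  have hw : (![2,2,2] : Fin 3 → ℕ) (f ⟨i, hi⟩) = 2 := by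
    have : ∀ j : Fin 3, (![2,2,2] : Fin 3 → ℕ) j = 2 := by decide
    exact this _
  rw [hw] at h2
  by_cases hi1 : 1 ≤ i
  · have ptw : ∀ u : Fin n, (if (SimpleGraph.pathGraph n).Adj ⟨i, hi⟩ u then (f u : ℕ) else 0)
        = (if u.val = i - 1 then (f u : ℕ) else 0) + (if u.val = i + 1 then (f u : ℕ) else 0) := by
      intro u
      by_cases h1 : u.val = i - 1
      · have hc : (SimpleGraph.pathGraph n).Adj ⟨i, hi⟩ u := by
          rw [SimpleGraph.pathGraph_adj]; simp only []; omega
        rw [if_pos hc, if_pos h1, if_neg (by omega), Nat.add_zero]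
      · by_cases hb : u.val = i + 1
        · have hc : (SimpleGraph.pathGraph n).Adj ⟨i, hi⟩ u := by
            rw [SimpleGraph.pathGraph_adj]; simp only []; omega
          rw [if_pos hc, if_neg h1, if_pos hb, Nat.zero_add]
        · have hc : ¬ (SimpleGraph.pathGraph n).Adj ⟨i, hi⟩ u := by
            rw [SimpleGraph.pathGraph_adj]; simp only []; omega
          rw [if_neg hc, if_neg h1, if_neg hb]
    rw [Finset.sum_congr rfl (fun u _ => ptw u), Finset.sum_add_distrib,
      sum_indicator_val, sum_indicator_val, hFD, hFD] at h2
    rw [if_pos hi1]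
    exact h2
  · have hi0 : i = 0 := by omega
    subst hi0
    have ptw : ∀ u : Fin n, (if (SimpleGraph.pathGraph n).Adj ⟨0, hi⟩ u then (f u : ℕ) else 0)
        = (if u.val = 0 + 1 then (f u : ℕ) else 0) := by
      intro u
      by_cases hb : u.val = 0 + 1
      · have hc : (SimpleGraph.pathGraph n).Adj ⟨0, hi⟩ u := by
          rw [SimpleGraph.pathGraph_adj]; simp only []; omega
        rw [if_pos hc, if_pos hb]
      · have hc : ¬ (SimpleGraph.pathGraph n).Adj ⟨0, hi⟩ u := by
          rw [SimpleGraph.pathGraph_adj]; simp only []; omega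
        rw [if_neg hc, if_neg hb]
    rw [Finset.sum_congr rfl (fun u _ => ptw u), sum_indicator_val, hFD] at h2
    rw [if_neg hi1, Nat.zero_add]
    exact h2

lemma lb_s14 (n : ℕ) (hn : 3 ≤ n) (f : Fin n → Fin 3)
    (hf : WDom (SimpleGraph.pathGraph n) ![2,2,2] f) :
    (if n % 4 = 0 then n else if n % 4 = 2 then n + 2 else n + 1) ≤ ∑ v, (f v : ℕ) := by
  set F : ℕ → ℕ := fun i => if h : i < n then (f ⟨i, h⟩ : ℕ) else 0 with hFdef
  have hF : ∀ (i : ℕ) (h : i < n), F i = (f ⟨i, h⟩ : ℕ) := by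
    intro i h; simp [hFdef, h]
  have hF0 : ∀ i, ¬ i < n → F i = 0 := by
    intro i h; simp [hFdef, h]
  have hks := key f hf F hF hF0
  have hB0 : 2 ≤ F 1 := by have h := hks 0 (by omega); simpa using h
  have hEnd : 2 ≤ F (n-2) := by
    have h := hks (n-1) (by omega)
    rw [if_pos (by omega : 1 ≤ n-1)] at h
    have e1 : n - 1 - 1 = n - 2 := by omega
    have e2 : F (n - 1 + 1) = 0 := hF0 _ (by omega)
    rw [e1, e2] at h
    omega
  have hpair : ∀ i, i + 2 < n → 2 ≤ F i + F (i+2) := by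
    intro i h
    have hk := hks (i+1) (by omega)
    rw [if_pos (by omega : 1 ≤ i+1)] at hk
    have e1 : i + 1 - 1 = i := by omega
    rw [e1] at hk
    exact hk
  have hA : ∀ k, k + 1 < (n+1)/2 → 2 ≤ F (2*k) + F (2*(k+1)) := by
    intro k hk
    have e : 2*(k+1) = 2*k + 2 := by ring
    rw [e]
    exact hpair (2*k) (by omega)
  have hB : ∀ k, k + 1 < n/2 → 2 ≤ F (2*k+1) + F (2*(k+1)+1) := by
    intro k hk
    have e : 2*(k+1)+1 = (2*k+1) + 2 := by ring
    rw [e]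
    exact hpair (2*k+1) (by omega)
  have hB0' : 2 ≤ F (2*0+1) := by simpa using hB0
  have htot : ∑ v, (f v : ℕ)
      = (∑ k ∈ range ((n+1)/2), F (2*k)) + ∑ k ∈ range (n/2), F (2*k+1) := by
    rw [← sum_range_even_odd F n, ← Fin.sum_univ_eq_sum_range F n]
    refine Finset.sum_congr rfl (fun v _ => ?_)
    rw [hF v.val v.isLt, Fin.eta]
  rw [htot]
  rcases Nat.even_or_odd n with ⟨t, ht⟩ | ⟨t, ht⟩
  · have hAr : 2*(((n+1)/2+1)/2) ≤ ∑ k ∈ range ((n+1)/2), F (2*k) := by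
      refine seq_lb_right _ _ (by omega) hA ?_
      show 2 ≤ F (2*((n+1)/2 - 1))
      rw [show 2*((n+1)/2 - 1) = n - 2 by omega]
      exact hEnd
    have hBl : 2*((n/2+1)/2) ≤ ∑ k ∈ range (n/2), F (2*k+1) :=
      seq_lb_left _ _ (by omega) hB hB0'
    split_ifs <;> omega
  · have hAl : 2*(((n+1)/2)/2) ≤ ∑ k ∈ range ((n+1)/2), F (2*k) :=
      seq_lb _ _ hA
    have hBb : n/2 + 2 - (n/2) % 2 ≤ ∑ k ∈ range (n/2), F (2*k+1) := by
      refine seq_lb_both _ _ (by omega) hB hB0' ?_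
      show 2 ≤ F (2*(n/2 - 1) + 1)
      rw [show 2*(n/2 - 1) + 1 = n - 2 by omega]
      exact hEnd
    split_ifs <;> omega

lemma count14 (n : ℕ) :
    ((range n).filter (fun i => i % 4 = 1 ∨ i % 4 = 2)).card = (n+2)/4 + (n+1)/4 := by
  induction n with
  | zero => simp
  | succ n ih =>
    rw [Finset.range_add_one, Finset.filter_insert]
    by_cases h : n % 4 = 1 ∨ n % 4 = 2
    · rw [if_pos h, Finset.card_insert_of_notMem (by simp)]
      omega
    · rw [if_neg h]
      omega

lemma card_filter_fin (n : ℕ) (p : ℕ → Prop) [DecidablePred p] :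
    ((univ : Finset (Fin n)).filter (fun i => p i.val)).card
      = ((range n).filter p).card := by
  rw [Finset.card_filter, Finset.card_filter,
    ← Fin.sum_univ_eq_sum_range (fun i => if p i then 1 else 0) n]

lemma hw2 : ∀ j : Fin 3, (![2,2,2] : Fin 3 → ℕ) j = 2 := by decide

theorem gammaW222_path (n : ℕ) (hn : 3 ≤ n) :
    gammaW (SimpleGraph.pathGraph n) ![2,2,2] = 2 * gammaT (SimpleGraph.pathGraph n) ∧
    gammaW (SimpleGraph.pathGraph n) ![2,2,2] =
      (if n % 4 = 0 then n else if n % 4 = 2 then n + 2 else n + 1) := by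
  set g : ℕ := (if n % 4 = 0 then n else if n % 4 = 2 then n + 2 else n + 1) with hg
  -- the explicit total dominating set
  set S : Finset (Fin n) := univ.filter
      (fun i => i.val % 4 = 1 ∨ i.val % 4 = 2 ∨ ((n % 4 = 1 ∨ n % 4 = 2) ∧ i.val = n - 2))
      with hS
  have hdom : ∀ v : Fin n, ∃ u ∈ S, (SimpleGraph.pathGraph n).Adj u v := by
    intro v
    have hv := v.isLt
    by_cases hres : v.val % 4 = 1 ∨ v.val % 4 = 0
    · by_cases h1 : v.val + 1 < n
      · refine ⟨⟨v.val + 1, h1⟩, ?_, ?_⟩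
        · rw [hS, Finset.mem_filter]
          refine ⟨Finset.mem_univ _, ?_⟩
          show (v.val+1) % 4 = 1 ∨ (v.val+1) % 4 = 2 ∨ ((n % 4 = 1 ∨ n % 4 = 2) ∧ v.val+1 = n - 2)
          omega
        · rw [SimpleGraph.pathGraph_adj]
          exact Or.inr rfl
      · refine ⟨⟨v.val - 1, by omega⟩, ?_, ?_⟩
        · rw [hS, Finset.mem_filter]
          refine ⟨Finset.mem_univ _, ?_⟩
          show (v.val-1) % 4 = 1 ∨ (v.val-1) % 4 = 2 ∨ ((n % 4 = 1 ∨ n % 4 = 2) ∧ v.val-1 = n - 2)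
          omega
        · rw [SimpleGraph.pathGraph_adj]
          exact Or.inl (by omega : v.val - 1 + 1 = v.val)
    · refine ⟨⟨v.val - 1, by omega⟩, ?_, ?_⟩
      · rw [hS, Finset.mem_filter]
        refine ⟨Finset.mem_univ _, ?_⟩
        show (v.val-1) % 4 = 1 ∨ (v.val-1) % 4 = 2 ∨ ((n % 4 = 1 ∨ n % 4 = 2) ∧ v.val-1 = n - 2)
        omega
      · rw [SimpleGraph.pathGraph_adj]
        exact Or.inl (by omega : v.val - 1 + 1 = v.val)
  -- cardinality bound
  have hScard : 2 * S.card ≤ g := by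
    have hc : S.card = ((range n).filter
        (fun i => i % 4 = 1 ∨ i % 4 = 2 ∨ ((n % 4 = 1 ∨ n % 4 = 2) ∧ i = n - 2))).card := by
      rw [hS]
      exact card_filter_fin n (fun i => i % 4 = 1 ∨ i % 4 = 2 ∨ ((n % 4 = 1 ∨ n % 4 = 2) ∧ i = n - 2))
    by_cases hcase : n % 4 = 1 ∨ n % 4 = 2
    · have hsub : (range n).filter
          (fun i => i % 4 = 1 ∨ i % 4 = 2 ∨ ((n % 4 = 1 ∨ n % 4 = 2) ∧ i = n - 2))
          ⊆ insert (n-2) ((range n).filter (fun i => i % 4 = 1 ∨ i % 4 = 2)) := by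
        intro i hi
        rw [Finset.mem_filter] at hi
        rw [Finset.mem_insert, Finset.mem_filter]
        rcases hi with ⟨hir, h | h | h⟩
        · exact Or.inr ⟨hir, Or.inl h⟩
        · exact Or.inr ⟨hir, Or.inr h⟩
        · exact Or.inl h.2
      have hle := (Finset.card_le_card hsub).trans (Finset.card_insert_le _ _)
      rw [count14] at hle
      rw [hc] at *
      rw [hg]
      split_ifs <;> omega
    · have heq : (range n).filter
          (fun i => i % 4 = 1 ∨ i % 4 = 2 ∨ ((n % 4 = 1 ∨ n % 4 = 2) ∧ i = n - 2))
          = (range n).filter (fun i => i % 4 = 1 ∨ i % 4 = 2) := by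
        refine Finset.filter_congr (fun x _ => ?_)
        constructor
        · rintro (h | h | h)
          · exact Or.inl h
          · exact Or.inr h
          · exact absurd h.1 hcase
        · rintro (h | h)
          · exact Or.inl h
          · exact Or.inr (Or.inl h)
      rw [heq, count14] at hc
      rw [hg]
      split_ifs <;> omega
  -- gammaT ≤ S.card
  have hγt_le : gammaT (SimpleGraph.pathGraph n) ≤ S.card := Nat.sInf_le ⟨S, hdom, rfl⟩
  -- a minimum total dominating set
  have hne : {m | ∃ T : Finset (Fin n),
      (∀ v, ∃ u ∈ T, (SimpleGraph.pathGraph n).Adj u v) ∧ T.card = m}.Nonempty :=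
    ⟨S.card, S, hdom, rfl⟩
  obtain ⟨T, hT, hTc⟩ := Nat.sInf_mem hne
  -- the function 2·1_T
  set ft : Fin n → Fin 3 := fun v => if v ∈ T then 2 else 0 with hft
  have hWt : WDom (SimpleGraph.pathGraph n) ![2,2,2] ft := by
    intro v
    obtain ⟨u₀, hu₀T, hu₀adj⟩ := hT v
    rw [hw2]
    have hterm : (if (SimpleGraph.pathGraph n).Adj v u₀ then (ft u₀ : ℕ) else 0) = 2 := by
      rw [if_pos hu₀adj.symm, hft]
      simp [hu₀T]
    calc (2:ℕ) = _ := hterm.symm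
      _ ≤ ∑ u, if (SimpleGraph.pathGraph n).Adj v u then (ft u : ℕ) else 0 :=
        Finset.single_le_sum
          (f := fun u => if (SimpleGraph.pathGraph n).Adj v u then (ft u : ℕ) else 0)
          (fun i _ => Nat.zero_le _) (Finset.mem_univ u₀)
  have hwt : ∑ v, (ft v : ℕ) = 2 * T.card := by
    have : ∀ v : Fin n, (ft v : ℕ) = if v ∈ T then 2 else 0 := by
      intro v
      by_cases h : v ∈ T
      · have hv2 : ft v = 2 := by rw [hft]; exact if_pos h
        rw [hv2, if_pos h]
        decide
      · have hv0 : ft v = 0 := by rw [hft]; exact if_neg h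
        rw [hv0, if_neg h]
        decide
    rw [Finset.sum_congr rfl (fun v _ => this v), Finset.sum_ite_mem,
      Finset.univ_inter, Finset.sum_const, smul_eq_mul, mul_comm]
  have hγ222_le : gammaW (SimpleGraph.pathGraph n) ![2,2,2]
      ≤ 2 * gammaT (SimpleGraph.pathGraph n) :=
    Nat.sInf_le ⟨ft, hWt, by rw [hwt]; exact congrArg (2 * ·) hTc⟩
  have hγ222_ge : g ≤ gammaW (SimpleGraph.pathGraph n) ![2,2,2] := by
    refine le_csInf ⟨2 * T.card, ft, hWt, hwt⟩ ?_
    rintro m ⟨f, hf, rfl⟩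
    rw [hg]
    exact lb_s14 n hn f hf
  constructor
  · omega
  · omega
end

section
/- For any graph G with no isolated vertex, of order n and maximum degree Δ: ⌈(2n + γ_t(G))/(Δ+1)⌉ ≤ γ_{(2,2,1)}(G) ≤ min{3γ(G), 2γ_t(G)}. Moreover, if G has minimum degree δ ≥ 2, then γ_{(2,2,1)}(G) ≤ γ_{×2,t}(G). -/
open scoped Classical
open Finset SimpleGraph

section Aux
variable {V : Type*} [Fintype V] {G : SimpleGraph V}

lemma w221_pos (i : Fin 3) : 1 ≤ (![2,2,1] : Fin 3 → ℕ) i := by revert i; decide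

lemma w221_le_two (i : Fin 3) : (![2,2,1] : Fin 3 → ℕ) i ≤ 2 := by revert i; decide

lemma w221_key (i : Fin 3) :
    2 + (if i ≠ 0 then 1 else 0) ≤ (![2,2,1] : Fin 3 → ℕ) i + (i : ℕ) := by revert i; decide

lemma gammaW_le {l : ℕ} {w : Fin (l+1) → ℕ} {f : V → Fin (l+1)} (hf : WDom G w f) :
    gammaW G w ≤ ∑ v, (f v : ℕ) :=
  Nat.sInf_le ⟨f, hf, rfl⟩

lemma sum_ind (S : Finset V) (c : ℕ) : ∑ v, (if v ∈ S then c else 0) = c * S.card := by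
  rw [Finset.sum_ite_mem, Finset.univ_inter, Finset.sum_const, smul_eq_mul, mul_comm]

end Aux

theorem gammaW221_bounds {V : Type*} [Fintype V] (G : SimpleGraph V)
    (hG : ∀ v, ∃ u, G.Adj v u) :
    (⌈(2 * (Fintype.card V : ℚ) + (gammaT G : ℚ)) / ((G.maxDegree : ℚ) + 1)⌉ ≤
        (gammaW G ![2,2,1] : ℤ) ∧
      gammaW G ![2,2,1] ≤ min (3 * gamma G) (2 * gammaT G)) ∧
    (2 ≤ G.minDegree → gammaW G ![2,2,1] ≤ gammaX2T G) := by
  classical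
  have hWne : {n | ∃ f : V → Fin 3, WDom G ![2,2,1] f ∧ ∑ v, (f v : ℕ) = n}.Nonempty := by
    refine ⟨∑ v : V, ((2 : Fin 3) : ℕ), fun _ => 2, fun v => ?_, rfl⟩
    obtain ⟨u, hu⟩ := hG v
    calc (![2,2,1] : Fin 3 → ℕ) 2 ≤ (if G.Adj v u then ((2 : Fin 3) : ℕ) else 0) := by
          simp [hu]
      _ ≤ ∑ u', if G.Adj v u' then ((2 : Fin 3) : ℕ) else 0 :=
          Finset.single_le_sum (f := fun u' => if G.Adj v u' then ((2 : Fin 3) : ℕ) else 0)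
            (fun i _ => Nat.zero_le _) (Finset.mem_univ u)
  obtain ⟨f, hf, hfsum⟩ := Nat.sInf_mem hWne
  have hfω : gammaW G ![2,2,1] = ∑ v, (f v : ℕ) := hfsum.symm
  clear hfsum
  constructor
  · constructor
    · -- lower bound
      have hTD : ∀ v, ∃ u ∈ Finset.univ.filter (fun v => f v ≠ 0), G.Adj u v := by
        intro v
        have h1 : 1 ≤ ∑ u, if G.Adj v u then (f u : ℕ) else 0 :=
          le_trans (w221_pos (f v)) (hf v)
        have hne0 : (∑ u, if G.Adj v u then (f u : ℕ) else 0) ≠ 0 := by omega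
        obtain ⟨u, -, hu⟩ := Finset.exists_ne_zero_of_sum_ne_zero hne0
        by_cases hadj : G.Adj v u
        · refine ⟨u, Finset.mem_filter.mpr ⟨Finset.mem_univ u, ?_⟩, hadj.symm⟩
          intro h0
          rw [if_pos hadj, h0] at hu
          simp at hu
        · rw [if_neg hadj] at hu; exact absurd rfl hu
      have hγT : gammaT G ≤ (Finset.univ.filter (fun v => f v ≠ 0)).card :=
        Nat.sInf_le ⟨_, hTD, rfl⟩
      have hsum : ∑ v, (![2,2,1] : Fin 3 → ℕ) (f v) ≤ G.maxDegree * ∑ v, (f v : ℕ) := by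
        calc ∑ v, (![2,2,1] : Fin 3 → ℕ) (f v)
            ≤ ∑ v, ∑ u, (if G.Adj v u then (f u : ℕ) else 0) :=
              Finset.sum_le_sum (fun v _ => hf v)
          _ = ∑ u, ∑ v, (if G.Adj v u then (f u : ℕ) else 0) := Finset.sum_comm
          _ = ∑ u : V, (Finset.univ.filter (fun v => G.Adj v u)).card * (f u : ℕ) := by
              refine Finset.sum_congr rfl (fun u _ => ?_)
              rw [Finset.sum_ite, Finset.sum_const, Finset.sum_const_zero, add_zero,
                smul_eq_mul]
          _ ≤ ∑ u : V, G.maxDegree * (f u : ℕ) := by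
              refine Finset.sum_le_sum (fun u _ => Nat.mul_le_mul_right _ ?_)
              have h : Finset.univ.filter (fun v => G.Adj v u) = G.neighborFinset u := by
                ext x; simp [SimpleGraph.adj_comm]
              rw [h]
              exact G.degree_le_maxDegree u
          _ = G.maxDegree * ∑ v, (f v : ℕ) := by rw [Finset.mul_sum]
      have hcard : (Finset.univ.filter (fun v => f v ≠ 0)).card
          = ∑ v, (if f v ≠ 0 then 1 else 0) := Finset.card_filter _ _
      have hmain : 2 * Fintype.card V + gammaT G ≤ (G.maxDegree + 1) * ∑ v, (f v : ℕ) := by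
        have hpt : ∑ v : V, (2 + (if f v ≠ 0 then 1 else 0))
            ≤ ∑ v, ((![2,2,1] : Fin 3 → ℕ) (f v) + (f v : ℕ)) :=
          Finset.sum_le_sum (fun v _ => w221_key (f v))
        rw [Finset.sum_add_distrib, Finset.sum_add_distrib, Finset.sum_const,
          Finset.card_univ, smul_eq_mul] at hpt
        have hexp : (G.maxDegree + 1) * ∑ v, (f v : ℕ)
            = G.maxDegree * ∑ v, (f v : ℕ) + ∑ v, (f v : ℕ) := by ring
        omega
      rw [hfω]
      rw [Int.ceil_le]
      have hΔ : (0 : ℚ) < (G.maxDegree : ℚ) + 1 := by positivity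
      rw [div_le_iff₀ hΔ]
      have hq : ((2 * Fintype.card V + gammaT G : ℕ) : ℚ)
          ≤ (((G.maxDegree + 1) * ∑ v, (f v : ℕ) : ℕ) : ℚ) := by exact_mod_cast hmain
      push_cast at hq ⊢
      linarith
    · refine le_min ?_ ?_
      · -- 3 * gamma
        have hDne : {n | ∃ S : Finset V,
            (∀ v, v ∈ S ∨ ∃ u ∈ S, G.Adj u v) ∧ S.card = n}.Nonempty :=
          ⟨Fintype.card V, Finset.univ, fun v => Or.inl (Finset.mem_univ v), by simp⟩
        obtain ⟨S, hSdom, hScard⟩ := Nat.sInf_mem hDne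
        choose t ht using hG
        set T : Finset V := S.image t with hT
        set g : V → Fin 3 := fun v => if v ∈ S then 2 else if v ∈ T then 1 else 0 with hg
        have hgW : WDom G ![2,2,1] g := by
          intro v
          by_cases hvS : v ∈ S
          · have htv : t v ∈ T := Finset.mem_image_of_mem t hvS
            have h1 : 1 ≤ (if G.Adj v (t v) then (g (t v) : ℕ) else 0) := by
              rw [if_pos (ht v)]
              by_cases h : t v ∈ S <;> simp [hg, h, htv]
            have hgv : g v = 2 := by simp [hg, hvS]
            calc (![2,2,1] : Fin 3 → ℕ) (g v) = 1 := by rw [hgv]; rfl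
              _ ≤ _ := h1
              _ ≤ ∑ u, if G.Adj v u then (g u : ℕ) else 0 :=
                  Finset.single_le_sum (f := fun u => if G.Adj v u then (g u : ℕ) else 0)
                    (fun i _ => Nat.zero_le _) (Finset.mem_univ (t v))
          · obtain ⟨u, huS, huv⟩ := (hSdom v).resolve_left hvS
            have h2 : 2 ≤ (if G.Adj v u then (g u : ℕ) else 0) := by
              rw [if_pos huv.symm]; simp [hg, huS]
            calc (![2,2,1] : Fin 3 → ℕ) (g v) ≤ 2 := w221_le_two _
              _ ≤ _ := h2
              _ ≤ ∑ u', if G.Adj v u' then (g u' : ℕ) else 0 :=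
                  Finset.single_le_sum (f := fun u' => if G.Adj v u' then (g u' : ℕ) else 0)
                    (fun i _ => Nat.zero_le _) (Finset.mem_univ u)
        have hwt : ∑ v, (g v : ℕ) ≤ 3 * S.card := by
          have hpt : ∀ v, (g v : ℕ)
              ≤ (if v ∈ S then 2 else 0) + (if v ∈ T then 1 else 0) := by
            intro v
            by_cases h1 : v ∈ S <;> by_cases h2 : v ∈ T <;> simp [hg, h1, h2]
          have hTle : T.card ≤ S.card := by rw [hT]; exact Finset.card_image_le
          calc ∑ v, (g v : ℕ)
              ≤ ∑ v, ((if v ∈ S then 2 else 0) + (if v ∈ T then 1 else 0)) :=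
                Finset.sum_le_sum (fun v _ => hpt v)
            _ = 2 * S.card + 1 * T.card := by rw [Finset.sum_add_distrib, sum_ind, sum_ind]
            _ ≤ 3 * S.card := by omega
        calc gammaW G ![2,2,1] ≤ ∑ v, (g v : ℕ) := gammaW_le hgW
          _ ≤ 3 * S.card := hwt
          _ = 3 * gamma G := by rw [hScard]; rfl
      · -- 2 * gammaT
        have hTne : {n | ∃ S : Finset V, (∀ v, ∃ u ∈ S, G.Adj u v) ∧ S.card = n}.Nonempty := by
          refine ⟨Fintype.card V, Finset.univ, fun v => ?_, by simp⟩
          obtain ⟨u, hu⟩ := hG v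
          exact ⟨u, Finset.mem_univ u, hu.symm⟩
        obtain ⟨S, hSdom, hScard⟩ := Nat.sInf_mem hTne
        set g : V → Fin 3 := fun v => if v ∈ S then 2 else 0 with hg
        have hgW : WDom G ![2,2,1] g := by
          intro v
          obtain ⟨u, huS, huv⟩ := hSdom v
          have h2 : 2 ≤ (if G.Adj v u then (g u : ℕ) else 0) := by
            rw [if_pos huv.symm]; simp [hg, huS]
          calc (![2,2,1] : Fin 3 → ℕ) (g v) ≤ 2 := w221_le_two _
            _ ≤ _ := h2
            _ ≤ ∑ u', if G.Adj v u' then (g u' : ℕ) else 0 :=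
                Finset.single_le_sum (f := fun u' => if G.Adj v u' then (g u' : ℕ) else 0)
                  (fun i _ => Nat.zero_le _) (Finset.mem_univ u)
        have hwt : ∑ v, (g v : ℕ) = 2 * S.card := by
          have h : ∀ v, (g v : ℕ) = (if v ∈ S then 2 else 0) := by
            intro v; by_cases h : v ∈ S <;> simp [hg, h]
          rw [Finset.sum_congr rfl (fun v _ => h v), sum_ind]
        calc gammaW G ![2,2,1] ≤ ∑ v, (g v : ℕ) := gammaW_le hgW
          _ = 2 * S.card := hwt
          _ = 2 * gammaT G := by rw [hScard]; rfl
  · intro hδ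
    have hX2ne : {n | ∃ S : Finset V,
        (∀ v, 2 ≤ (S.filter (fun u => G.Adj u v)).card) ∧ S.card = n}.Nonempty := by
      refine ⟨Fintype.card V, Finset.univ, fun v => ?_, by simp⟩
      have h : Finset.univ.filter (fun u => G.Adj u v) = G.neighborFinset v := by
        ext x; simp [SimpleGraph.adj_comm]
      rw [h]
      exact le_trans hδ (G.minDegree_le_degree v)
    obtain ⟨S, hSdom, hScard⟩ := Nat.sInf_mem hX2ne
    set g : V → Fin 3 := fun v => if v ∈ S then 1 else 0 with hg
    have hgW : WDom G ![2,2,1] g := by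
      intro v
      have h2 : 2 ≤ ∑ u, if G.Adj v u then (g u : ℕ) else 0 := by
        have hsum : ∑ u, (if G.Adj v u then (g u : ℕ) else 0)
            = (Finset.univ.filter (fun u => G.Adj v u ∧ u ∈ S)).card := by
          rw [Finset.card_filter]
          refine Finset.sum_congr rfl (fun u _ => ?_)
          by_cases h1 : G.Adj v u <;> by_cases h2 : u ∈ S <;> simp [hg, h1, h2]
        rw [hsum]
        refine le_trans (hSdom v) (Finset.card_le_card ?_)
        intro x hx
        simp only [Finset.mem_filter] at hx ⊢
        exact ⟨Finset.mem_univ x, hx.2.symm, hx.1⟩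
      exact le_trans (w221_le_two _) h2
    have hwt : ∑ v, (g v : ℕ) = S.card := by
      have h : ∀ v, (g v : ℕ) = (if v ∈ S then 1 else 0) := by
        intro v; by_cases h : v ∈ S <;> simp [hg, h]
      rw [Finset.sum_congr rfl (fun v _ => h v), sum_ind, one_mul]
    calc gammaW G ![2,2,1] ≤ ∑ v, (g v : ℕ) := gammaW_le hgW
      _ = S.card := hwt
      _ = gammaX2T G := by rw [hScard]; rfl
end

section
/- For any integer n ≥ 3, γ_{(2,2,0)}(P_n) = γ_{(2,2,0)}(C_n) = 2⌈n/3⌉. -/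
open scoped Classical
open Finset SimpleGraph

open Fin.CommRing in
lemma cycle_adj_iff (m : ℕ) (w u : Fin (m+3)) :
    (cycleGraph (m+3)).Adj w u ↔ (u = w - 1 ∨ u = w + 1) := by
  rw [cycleGraph_adj (n := m+1)]
  constructor
  · rintro (h | h)
    · left; linear_combination -h
    · right; linear_combination h
  · rintro (h | h)
    · left; linear_combination -h
    · right; linear_combination h

open Fin.CommRing in
lemma cycle_nbr (m : ℕ) (w : Fin (m+3)) (g : Fin (m+3) → ℕ) :
    (∑ u, @ite ℕ ((cycleGraph (m+3)).Adj w u) (Classical.propDecidable _) (g u) 0)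
      = g (w - 1) + g (w + 1) := by
  have hne : w - 1 ≠ w + 1 := by
    intro h
    have h2 : (2 : Fin (m+3)) = 0 := by linear_combination -h
    simp [Fin.ext_iff, Nat.mod_eq_of_lt (show 2 < m+3 by omega)] at h2
  have hpt : ∀ u : Fin (m+3), @ite ℕ ((cycleGraph (m+3)).Adj w u) (Classical.propDecidable _) (g u) 0
      = (if u = w - 1 then g u else 0) + (if u = w + 1 then g u else 0) := by
    intro u
    by_cases h1 : u = w - 1
    · subst h1
      rw [if_pos ((cycle_adj_iff m w _).mpr (Or.inl rfl)), if_pos rfl, if_neg hne]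
      omega
    · by_cases h2 : u = w + 1
      · subst h2
        rw [if_pos ((cycle_adj_iff m w _).mpr (Or.inr rfl)), if_neg (Ne.symm hne), if_pos rfl]
        omega
      · rw [if_neg (fun ha => by rcases (cycle_adj_iff m w u).mp ha with h | h
                                 exacts [h1 h, h2 h]), if_neg h1, if_neg h2]
  calc (∑ u, @ite ℕ ((cycleGraph (m+3)).Adj w u) (Classical.propDecidable _) (g u) 0)
      = ∑ u : Fin (m+3), ((if u = w - 1 then g u else 0) + (if u = w + 1 then g u else 0)) :=
        Finset.sum_congr rfl (fun u _ => hpt u)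
    _ = g (w - 1) + g (w + 1) := by
        rw [Finset.sum_add_distrib, Finset.sum_ite_eq' Finset.univ (w-1) g,
          Finset.sum_ite_eq' Finset.univ (w+1) g]
        simp

lemma unique_excess {α : Type*} [Fintype α] [DecidableEq α] (F : α → ℕ) (hF : ∀ v, 2 ≤ F v)
    (htot : ∑ v, F v = 2 * Fintype.card α + 1) (p : α) (hp : 3 ≤ F p)
    (u : α) (hu : u ≠ p) : F u = 2 := by
  have h1 : ∑ v ∈ univ.erase p, F v + F p = ∑ v, F v := Finset.sum_erase_add _ _ (mem_univ p)
  have hu' : u ∈ univ.erase p := Finset.mem_erase.mpr ⟨hu, mem_univ u⟩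
  have h2 : ∑ v ∈ (univ.erase p).erase u, F v + F u = ∑ v ∈ univ.erase p, F v :=
    Finset.sum_erase_add _ _ hu'
  have hc1 : (univ.erase p).card = Fintype.card α - 1 := by
    rw [Finset.card_erase_of_mem (mem_univ p), Finset.card_univ]
  have hc2 : ((univ.erase p).erase u).card = Fintype.card α - 1 - 1 := by
    rw [Finset.card_erase_of_mem hu', hc1]
  have h3 := Finset.card_nsmul_le_sum ((univ.erase p).erase u) F 2 (fun x _ => hF x)
  rw [hc2, smul_eq_mul] at h3
  have h3' : (Fintype.card α - 1 - 1) * 2 ≤ ∑ v ∈ (univ.erase p).erase u, F v := h3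
  have h4 := hF u
  have hN : 1 < Fintype.card α := Fintype.one_lt_card_iff.mpr ⟨u, p, hu⟩
  omega

open Fin.CommRing in
lemma cycle_lower (m : ℕ) (g : Fin (m+3) → ℕ) (hle : ∀ v, g v ≤ 2)
    (hP : ∀ v, g v ≤ 1 → 2 ≤ g (v-1) + g (v+1)) :
    2 * ((m + 3 + 2) / 3) ≤ ∑ v, g v := by
  have hS : ∀ v : Fin (m+3), 2 ≤ g v + g (v+1) + g (v+2) := by
    intro v
    by_cases h : g (v+1) ≤ 1
    · have h2 := hP (v+1) h
      rw [show v + 1 - 1 = v from by ring, show v + 1 + 1 = v + 2 from by ring] at h2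
      omega
    · omega
  have shift1 : ∑ v : Fin (m+3), g (v+1) = ∑ v, g v :=
    Fintype.sum_equiv (Equiv.addRight 1) _ _ (fun v => rfl)
  have shift2 : ∑ v : Fin (m+3), g (v+2) = ∑ v, g v :=
    Fintype.sum_equiv (Equiv.addRight 2) _ _ (fun v => rfl)
  have hsum3 : ∑ v : Fin (m+3), (g v + g (v+1) + g (v+2)) = 3 * ∑ v, g v := by
    rw [Finset.sum_add_distrib, Finset.sum_add_distrib, shift1, shift2]; ring
  have htot : 2 * (m+3) ≤ 3 * ∑ v, g v := by
    have h := Finset.card_nsmul_le_sum univ (fun v : Fin (m+3) => g v + g (v+1) + g (v+2)) 2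
      (fun v _ => hS v)
    have h' : (univ : Finset (Fin (m+3))).card • 2 ≤ ∑ v : Fin (m+3), (g v + g (v+1) + g (v+2)) := h
    rw [hsum3, smul_eq_mul, Finset.card_univ, Fintype.card_fin] at h'
    omega
  by_cases h31 : m % 3 = 1
  · by_contra hW
    have hW3 : 3 * ∑ v, g v = 2*(m+3) + 1 := by omega
    have hne1 : ∀ p : Fin (m+3), g p ≠ 1 := by
      intro p hp
      have hpq := hP p (by omega)
      have hexc : 3 ≤ g (p-1) + g (p-1+1) + g (p-1+2) := by
        rw [show p - 1 + 1 = p from by ring, show p - 1 + 2 = p + 1 from by ring]; omega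
      have huniq : ∀ u : Fin (m+3), u ≠ p - 1 → g u + g (u+1) + g (u+2) = 2 := by
        intro u hu
        exact unique_excess (fun v => g v + g (v+1) + g (v+2)) hS
          (by rw [hsum3, hW3, Fintype.card_fin]) (p-1) hexc u hu
      have hA : g p + g (p+1) + g (p+2) = 2 := huniq p (by
        intro h
        have h1 : (1 : Fin (m+3)) = 0 := by linear_combination h
        simp [Fin.ext_iff] at h1)
      have hB : g (p+1) + g (p+1+1) + g (p+1+2) = 2 := huniq (p+1) (by
        intro h
        have h1 : (2 : Fin (m+3)) = 0 := by linear_combination h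
        simp [Fin.ext_iff, Nat.mod_eq_of_lt (show 2 < m+3 by omega)] at h1)
      rw [show p + 1 + 1 = p + 2 from by ring, show p + 1 + 2 = p + 3 from by ring] at hB
      by_cases hq1 : g (p+1) ≤ 1
      · by_cases hq2 : g (p+2) ≤ 1
        · have c1 := hP (p+1) hq1
          rw [show p + 1 - 1 = p from by ring, show p + 1 + 1 = p + 2 from by ring] at c1
          have c2 := hP (p+2) hq2
          rw [show p + 2 - 1 = p + 1 from by ring, show p + 2 + 1 = p + 3 from by ring] at c2
          omega
        · omega
      · omega
    have hdvd : 2 ∣ ∑ v, g v :=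
      Finset.dvd_sum (fun v _ => by have h1 := hle v; have h2 := hne1 v; omega)
    omega
  · omega

def fc (n : ℕ) : Fin n → Fin 3 :=
  fun v => if (v : ℕ) % 3 = 1 ∨ (n % 3 = 1 ∧ (v : ℕ) = n - 1) then 2 else 0

lemma count1 (n : ℕ) : ∑ i ∈ Finset.range n, (if i % 3 = 1 then (2:ℕ) else 0) = 2 * ((n+1)/3) := by
  induction n with
  | zero => simp
  | succ k ih =>
    rw [Finset.sum_range_succ, ih]
    by_cases h : k % 3 = 1 <;> simp [h] <;> omega

lemma fc_sum (n : ℕ) (hn : 3 ≤ n) : ∑ v, ((fc n v : ℕ)) = 2 * ((n+2)/3) := by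
  have h1 : ∀ v : Fin n, ((fc n v : ℕ))
      = if (v:ℕ) % 3 = 1 ∨ (n % 3 = 1 ∧ (v:ℕ) = n - 1) then 2 else 0 := by
    intro v; simp only [fc]; split <;> rfl
  simp only [h1]
  rw [Fin.sum_univ_eq_sum_range (fun i => if i % 3 = 1 ∨ (n % 3 = 1 ∧ i = n - 1) then 2 else 0) n]
  by_cases hc : n % 3 = 1
  · have hpt : ∀ i ∈ Finset.range n, (if i % 3 = 1 ∨ (n % 3 = 1 ∧ i = n - 1) then (2:ℕ) else 0)
        = (if i % 3 = 1 then 2 else 0) + (if i = n - 1 then 2 else 0) := by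
      intro i _
      by_cases h2 : i = n - 1
      · subst h2
        have h3 : ¬ (n-1) % 3 = 1 := by omega
        simp [h3, hc]
      · simp [h2]
    rw [Finset.sum_congr rfl hpt, Finset.sum_add_distrib, count1,
      Finset.sum_ite_eq' (Finset.range n) (n-1) (fun _ => 2),
      if_pos (Finset.mem_range.mpr (by omega))]
    omega
  · have hpt : ∀ i ∈ Finset.range n, (if i % 3 = 1 ∨ (n % 3 = 1 ∧ i = n - 1) then (2:ℕ) else 0)
        = (if i % 3 = 1 then 2 else 0) := fun i _ => by simp [hc]
    rw [Finset.sum_congr rfl hpt, count1]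
    omega

lemma fc_wdom (n : ℕ) (hn : 3 ≤ n) : WDom (pathGraph n) ![2,2,0] (fc n) := by
  intro v
  by_cases hv : (v:ℕ) % 3 = 1 ∨ (n % 3 = 1 ∧ (v:ℕ) = n - 1)
  · have h2 : fc n v = 2 := if_pos hv
    rw [h2]
    exact Nat.zero_le _
  · have h0 : fc n v = 0 := if_neg hv
    rw [h0]
    push_neg at hv
    obtain ⟨hv1, hv2⟩ := hv
    have hvlt := v.isLt
    obtain ⟨u, hadj, hu⟩ : ∃ u : Fin n, (pathGraph n).Adj v u ∧ fc n u = 2 := by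
      rcases (by omega : (v:ℕ) % 3 = 0 ∨ (v:ℕ) % 3 = 2) with h | h
      · have hlt : (v:ℕ) + 1 < n := by
          by_cases hc : n % 3 = 1
          · have := hv2 hc; omega
          · omega
        refine ⟨⟨(v:ℕ)+1, hlt⟩, ?_, ?_⟩
        · rw [pathGraph_adj]; left; rfl
        · exact if_pos (Or.inl (by simp; omega))
      · refine ⟨⟨(v:ℕ)-1, by omega⟩, ?_, ?_⟩
        · rw [pathGraph_adj]; right; simp; omega
        · exact if_pos (Or.inl (by simp; omega))
    refine le_trans ?_ (Finset.single_le_sum (fun i _ => Nat.zero_le _) (Finset.mem_univ u))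
    rw [if_pos hadj, hu]
    decide


theorem gammaW220_cycle_path (n : ℕ) (hn : 3 ≤ n) :
    gammaW (SimpleGraph.pathGraph n) ![2,2,0] = 2 * ((n + 2) / 3) ∧
    gammaW (SimpleGraph.cycleGraph n) ![2,2,0] = 2 * ((n + 2) / 3) := by
  obtain ⟨m, rfl⟩ : ∃ m, n = m + 3 := ⟨n - 3, by omega⟩
  have hfd : WDom (pathGraph (m+3)) ![2,2,0] (fc (m+3)) := fc_wdom _ (by omega)
  have hfs : ∑ v, ((fc (m+3) v : ℕ)) = 2 * ((m+3+2)/3) := fc_sum _ (by omega)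
  have hmono : ∀ f : Fin (m+3) → Fin 3,
      WDom (pathGraph (m+3)) ![2,2,0] f → WDom (cycleGraph (m+3)) ![2,2,0] f := by
    intro f hf v
    refine le_trans (hf v) (Finset.sum_le_sum fun u _ => ?_)
    by_cases h : (pathGraph (m+3)).Adj v u
    · rw [if_pos h, if_pos (pathGraph_le_cycleGraph h)]
    · rw [if_neg h]; exact Nat.zero_le _
  have hval : ∀ a : Fin 3, (a : ℕ) ≤ 1 → (![2,2,0] : Fin 3 → ℕ) a = 2 := by decide
  have hlow : ∀ f : Fin (m+3) → Fin 3, WDom (cycleGraph (m+3)) ![2,2,0] f →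
      2 * ((m+3+2)/3) ≤ ∑ v, ((f v : ℕ)) := by
    intro f hf
    have hP : ∀ v : Fin (m+3), ((f v : ℕ)) ≤ 1 → 2 ≤ ((f (v-1) : ℕ)) + ((f (v+1) : ℕ)) := by
      intro v hv
      have h := hf v
      rw [cycle_nbr m v (fun u => ((f u : ℕ)))] at h
      rwa [hval (f v) hv] at h
    exact cycle_lower m (fun v => ((f v : ℕ))) (fun v => Fin.is_le _) hP
  constructor
  · refine le_antisymm (Nat.sInf_le ⟨fc (m+3), hfd, hfs⟩) ?_
    refine le_csInf ⟨_, fc (m+3), hfd, hfs⟩ ?_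
    rintro k ⟨f, hf, rfl⟩
    exact hlow f (hmono f hf)
  · refine le_antisymm (Nat.sInf_le ⟨fc (m+3), hmono _ hfd, hfs⟩) ?_
    refine le_csInf ⟨_, fc (m+3), hmono _ hfd, hfs⟩ ?_
    rintro k ⟨f, hf, rfl⟩
    exact hlow f hf
end
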